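/- arXiv:2212.08368 — 4 statements merged into one kernel-verified Lean document; each statement's English description precedes it below -/
import Mathlib

section
/- Let H ≤ G be finitely generated groups with H undistorted (quasi-isometrically embedded) in G, and suppose the relative Morse boundary of H in G is empty, i.e., no geodesic ray of H remains Morse in the Cayley graph of G. Fix a Morse gauge M. Then there exists D = D(M) such that any two points x, y in (a coset of) H whose connecting geodesic in the Cayley graph of G is M-Morse satisfy d_G(x, y) ≤ D. (Equivalently: M-Morse geodesics of G have uniformly bounded intersection—in the coarse sense—with H.) -/
set_option maxHeartbeats 1600000

open Set Metric Topology Filter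

universe u

/-- `γ` restricted to `I` is a `(lam, eps)`-quasi-geodesic. -/
def IsQuasiGeodesicOn {X : Type*} [MetricSpace X] (γ : ℝ → X) (I : Set ℝ)
    (lam eps : ℝ) : Prop :=
  ∀ s ∈ I, ∀ t ∈ I,
    (1 / lam) * |s - t| - eps ≤ dist (γ s) (γ t) ∧ dist (γ s) (γ t) ≤ lam * |s - t| + eps

/-- `γ` restricted to `I` is a (unit-speed) geodesic. -/
def IsGeodesicOn {X : Type*} [MetricSpace X] (γ : ℝ → X) (I : Set ℝ) : Prop :=
  ∀ s ∈ I, ∀ t ∈ I, dist (γ s) (γ t) = |s - t|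

/-- A metric space is geodesic if any two points are joined by a geodesic. -/
def GeodesicSpace (X : Type*) [MetricSpace X] : Prop :=
  ∀ x y : X, ∃ γ : ℝ → X, γ 0 = x ∧ γ (dist x y) = y ∧ IsGeodesicOn γ (Icc 0 (dist x y))

/-- A Morse gauge: an increasing map `ℝ≥1 × ℝ≥0 → ℝ≥0`, continuous in the second argument. -/
def IsMorseGauge (M : ℝ → ℝ → ℝ) : Prop :=
  (∀ l e, 1 ≤ l → 0 ≤ e → 0 ≤ M l e) ∧
  (∀ l l' e e', 1 ≤ l → 0 ≤ e → l ≤ l' → e ≤ e' → M l e ≤ M l' e') ∧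
  (∀ l, 1 ≤ l → ContinuousOn (fun e => M l e) (Ici 0))

/-- Pointwise partial order on Morse gauges (on the domain `ℝ≥1 × ℝ≥0`). -/
def GaugeLE (M N : ℝ → ℝ → ℝ) : Prop :=
  ∀ l e, 1 ≤ l → 0 ≤ e → M l e ≤ N l e

/-- `γ` restricted to `I` is `M`-Morse: every continuous `(lam, eps)`-quasi-geodesic with
endpoints on `γ` lies in the closed `M lam eps`-neighbourhood of `γ`. -/
def IsMorseWith {X : Type*} [MetricSpace X] (M : ℝ → ℝ → ℝ) (γ : ℝ → X) (I : Set ℝ) : Prop :=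
  ∀ lam eps : ℝ, 1 ≤ lam → 0 ≤ eps →
    ∀ (η : ℝ → X) (a b : ℝ), a ≤ b →
      ContinuousOn η (Icc a b) → IsQuasiGeodesicOn η (Icc a b) lam eps →
      η a ∈ γ '' I → η b ∈ γ '' I →
      ∀ t ∈ Icc a b, ∃ s ∈ I, dist (η t) (γ s) ≤ M lam eps

/-- The constant `δ_M` associated to a Morse gauge `M`. -/
def morseDelta (M : ℝ → ℝ → ℝ) : ℝ :=
  max (4 * M 1 (2 * M 5 0) + 2 * M 5 0) (8 * M 3 0)

noncomputable def rclamp (R t : ℝ) : ℝ := max 0 (min t R)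

lemma rclamp_mem {R : ℝ} (hR : 0 ≤ R) (t : ℝ) : rclamp R t ∈ Icc 0 R := by
  constructor
  · exact le_max_left _ _
  · simp only [rclamp, max_le_iff]
    exact ⟨hR, min_le_right _ _⟩

lemma rclamp_eq_self {R t : ℝ} (h : t ∈ Icc 0 R) : rclamp R t = t := by
  simp only [rclamp, min_eq_left h.2, max_eq_right h.1]

lemma rclamp_dist (R s t : ℝ) : |rclamp R s - rclamp R t| ≤ |s - t| := by
  calc |rclamp R s - rclamp R t| ≤ |min s R - min t R| := by
        simpa [rclamp, max_comm] using abs_max_sub_max_le_abs (min s R) (min t R) 0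
    _ ≤ max |s - t| |R - R| := abs_min_sub_min_le_max _ _ _ _
    _ ≤ |s - t| := by simp

lemma rclamp_le_self {R t : ℝ} (ht : 0 ≤ t) : rclamp R t ≤ t :=
  max_le ht (min_le_left _ _)

lemma exists_geodesic {X : Type*} [MetricSpace X] (hX : GeodesicSpace X) (x y : X) :
    ∃ γ : ℝ → X, γ 0 = x ∧ γ (dist x y) = y ∧
      (∀ s ∈ Icc 0 (dist x y), ∀ t ∈ Icc 0 (dist x y), dist (γ s) (γ t) = |s - t|) ∧
      (∀ s t : ℝ, dist (γ s) (γ t) ≤ |s - t|) ∧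
      (∀ t, γ t = γ (rclamp (dist x y) t)) := by
  obtain ⟨γ, h0, hd, hg⟩ := hX x y
  have hD : 0 ≤ dist x y := dist_nonneg
  refine ⟨fun t => γ (rclamp (dist x y) t), ?_, ?_, ?_, ?_, ?_⟩ <;>
    simp only
  · rw [rclamp_eq_self ⟨le_rfl, hD⟩, h0]
  · rw [rclamp_eq_self ⟨hD, le_rfl⟩, hd]
  · intro s hs t ht
    rw [rclamp_eq_self hs, rclamp_eq_self ht]
    exact hg s hs t ht
  · intro s t
    calc dist (γ (rclamp (dist x y) s)) (γ (rclamp (dist x y) t))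
        = |rclamp (dist x y) s - rclamp (dist x y) t| :=
          hg _ (rclamp_mem hD _) _ (rclamp_mem hD _)
      _ ≤ |s - t| := rclamp_dist _ _ _
  · intro t
    rw [rclamp_eq_self (rclamp_mem hD t)]


lemma dots_lemma {X Y : Type*} [MetricSpace X] [MetricSpace Y]
    (hX : GeodesicSpace X)
    (ι : Y → X) (C : ℝ) (hC : 1 ≤ C)
    (hqie : ∀ y₁ y₂ : Y, (1/C) * dist y₁ y₂ - C ≤ dist (ι y₁) (ι y₂) ∧
      dist (ι y₁) (ι y₂) ≤ C * dist y₁ y₂ + C)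
    (M : ℝ → ℝ → ℝ)
    (σ : ℝ → Y) (R : ℝ) (hR : 0 ≤ R)
    (hσc : ∀ t, σ t = σ (rclamp R t))
    (hσ : ∀ s ∈ Icc 0 R, ∀ t ∈ Icc 0 R, dist (σ s) (σ t) = |s - t|)
    (G : ℝ → X) (L : ℝ) (hL : 0 ≤ L)
    (hG : ∀ s ∈ Icc 0 L, ∀ t ∈ Icc 0 L, dist (G s) (G t) = |s - t|)
    (hGM : IsMorseWith M G (Icc 0 L))
    (hG0 : G 0 = ι (σ 0)) (hGL : G L = ι (σ R)) :
    (∀ r ∈ Icc 0 R, ∃ s ∈ Icc 0 L, dist (ι (σ r)) (G s) ≤ M (2*C) (8*C) + 4*C) ∧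
    (∀ s ∈ Icc 0 L, ∃ r ∈ Icc 0 R, dist (G s) (ι (σ r)) ≤ 3 * M (2*C) (8*C) + 2*C) := by
  have hC0 : (0:ℝ) < C := lt_of_lt_of_le one_pos hC
  set K0 := M (2*C) (8*C) with hK0
  have hσd : ∀ s t : ℝ, dist (σ s) (σ t) = |rclamp R s - rclamp R t| := by
    intro s t
    rw [hσc s, hσc t]
    exact hσ _ (rclamp_mem hR _) _ (rclamp_mem hR _)
  have hσlip : ∀ s t : ℝ, dist (σ s) (σ t) ≤ |s - t| := by
    intro s t; rw [hσd]; exact rclamp_dist R s t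
  set q : ℕ → X := fun i => ι (σ (i : ℝ)) with hq
  choose c hc0 hc1 hciso hclip hcc using fun i => exists_geodesic hX (q i) (q (i+1))
  set d : ℕ → ℝ := fun i => dist (q i) (q (i+1)) with hd
  have hd0 : ∀ i, 0 ≤ d i := fun i => dist_nonneg
  have hd2C : ∀ i, d i ≤ 2*C := by
    intro i
    have h1 : dist (σ ((i:ℕ):ℝ)) (σ (((i+1:ℕ)):ℝ)) ≤ 1 := by
      refine (hσlip _ _).trans ?_
      push_cast; rw [abs_of_nonpos (by linarith)]; linarith
    calc d i ≤ C * dist (σ ((i:ℕ):ℝ)) (σ (((i+1:ℕ)):ℝ)) + C := (hqie _ _).2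
      _ ≤ C * 1 + C := by nlinarith
      _ = 2*C := by ring
  set m : ℕ := ⌈R⌉₊ with hmdef
  have hm : R ≤ (m:ℝ) := Nat.le_ceil R
  have hm1 : (m:ℝ) ≤ R + 1 := (Nat.ceil_lt_add_one hR).le
  set η : ℝ → X := fun t => c ⌊t⌋₊ ((t - (⌊t⌋₊:ℝ)) * d ⌊t⌋₊) with hηdef
  have hpiece : ∀ (i : ℕ), ∀ u ∈ Icc (i:ℝ) ((i:ℝ)+1), η u = c i ((u - i) * d i) := by
    intro i u hu
    rcases lt_or_eq_of_le hu.2 with h | h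
    · have hfl : ⌊u⌋₊ = i := by
        rw [Nat.floor_eq_iff (le_trans (Nat.cast_nonneg i) hu.1)]
        exact ⟨hu.1, by push_cast; linarith⟩
      simp only [hηdef, hfl]
    · have hu1 : u = ((i+1:ℕ):ℝ) := by push_cast; linarith
      have hfl : ⌊u⌋₊ = i + 1 := by rw [hu1, Nat.floor_natCast]
      have e1 : η u = c (i+1) 0 := by
        simp only [hηdef, hfl]
        congr 1
        rw [hu1]; push_cast; ring
      have e2 : c i ((u - i) * d i) = c i (d i) := by
        congr 1
        rw [hu1]; push_cast; ring
      rw [e1, e2, hc0, hc1]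
  have hnearq : ∀ u : ℝ, 0 ≤ u → dist (η u) (q ⌊u⌋₊) ≤ 2*C := by
    intro u hu
    have harg : (u - (⌊u⌋₊:ℝ)) * d ⌊u⌋₊ ∈ Icc 0 (d ⌊u⌋₊) := by
      constructor
      · exact mul_nonneg (sub_nonneg.2 (Nat.floor_le hu)) (hd0 _)
      · exact mul_le_of_le_one_left (hd0 _) (by linarith [Nat.lt_floor_add_one u])
    have h2 : q ⌊u⌋₊ = c ⌊u⌋₊ 0 := (hc0 _).symm
    rw [hηdef, h2]
    rw [hciso _ _ harg 0 ⟨le_rfl, hd0 _⟩, sub_zero, abs_of_nonneg harg.1]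
    exact harg.2.trans (hd2C _)
  have hpieceLip : ∀ (i : ℕ), ∀ s t : ℝ, (i:ℝ) ≤ s → s ≤ t → t ≤ (i:ℝ)+1 →
      dist (η s) (η t) ≤ 2*C*(t-s) := by
    intro i s t his hst hti
    rw [hpiece i s ⟨his, by linarith⟩, hpiece i t ⟨by linarith, hti⟩]
    have hms : (s - i) * d i ∈ Icc 0 (d i) :=
      ⟨mul_nonneg (by linarith) (hd0 _), mul_le_of_le_one_left (hd0 _) (by linarith)⟩
    have hmt : (t - i) * d i ∈ Icc 0 (d i) :=
      ⟨mul_nonneg (by linarith) (hd0 _), mul_le_of_le_one_left (hd0 _) (by linarith)⟩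
    rw [hciso _ _ hms _ hmt]
    have : |(s - i) * d i - (t - i) * d i| = (t - s) * d i := by
      rw [show (s - i) * d i - (t - i) * d i = -((t-s) * d i) by ring, abs_neg,
        abs_of_nonneg (mul_nonneg (by linarith) (hd0 _))]
    rw [this]
    nlinarith [hd2C i, hd0 i]
  have hlipN : ∀ k : ℕ, ∀ s t : ℝ, 0 ≤ s → s ≤ t → t ≤ (k:ℝ) →
      dist (η s) (η t) ≤ 2*C*(t-s) := by
    intro k
    induction k with
    | zero =>
      intro s t hs hst ht
      norm_num at ht
      have : s = t := le_antisymm hst (ht.trans hs)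
      rw [this, dist_self]; nlinarith
    | succ k ih =>
      intro s t hs hst ht
      rcases le_or_gt t (k:ℝ) with h | h
      · exact ih s t hs hst h
      rcases le_or_gt (k:ℝ) s with h2 | h2
      · exact hpieceLip k s t h2 hst (by push_cast at ht ⊢; linarith)
      · calc dist (η s) (η t) ≤ dist (η s) (η (k:ℝ)) + dist (η (k:ℝ)) (η t) :=
              dist_triangle _ _ _
          _ ≤ 2*C*((k:ℝ) - s) + 2*C*(t - (k:ℝ)) :=
              add_le_add (ih s (k:ℝ) hs h2.le le_rfl)
                (hpieceLip k (k:ℝ) t le_rfl h.le (by push_cast at ht ⊢; linarith))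
          _ = 2*C*(t-s) := by ring
  have hlip : ∀ s t : ℝ, 0 ≤ s → s ≤ t → dist (η s) (η t) ≤ 2*C*(t-s) := fun s t hs hst =>
    hlipN ⌈t⌉₊ s t hs hst (Nat.le_ceil t)
  have hcont : ContinuousOn η (Icc 0 (m:ℝ)) := by
    have hl : LipschitzOnWith (Real.toNNReal (2*C)) η (Icc 0 (m:ℝ)) := by
      rw [lipschitzOnWith_iff_dist_le_mul]
      intro x hx y hy
      have hcoe : ((Real.toNNReal (2*C)) : ℝ) = 2*C := Real.coe_toNNReal _ (by positivity)
      rw [hcoe, Real.dist_eq]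
      rcases le_total x y with h | h
      · rw [abs_of_nonpos (by linarith)]
        have := hlip x y hx.1 h; linarith
      · rw [abs_of_nonneg (by linarith)]
        have := hlip y x hy.1 h
        rw [dist_comm] at this; linarith
    exact hl.continuousOn
  have key : ∀ s t : ℝ, s ∈ Icc 0 (m:ℝ) → t ∈ Icc 0 (m:ℝ) → s ≤ t →
      1/(2*C) * (t - s) - 8*C ≤ dist (η s) (η t) ∧ dist (η s) (η t) ≤ 2*C*(t-s) + 8*C := by
    intro s t hs ht hst
    constructor
    · have h1 : dist (q ⌊s⌋₊) (q ⌊t⌋₊) ≤ dist (η s) (η t) + 4*C := by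
        have ha := hnearq s hs.1
        have hb := hnearq t ht.1
        calc dist (q ⌊s⌋₊) (q ⌊t⌋₊) ≤
            dist (q ⌊s⌋₊) (η s) + dist (η s) (η t) + dist (η t) (q ⌊t⌋₊) :=
              dist_triangle4 _ _ _ _
          _ ≤ dist (η s) (η t) + 4*C := by rw [dist_comm (q ⌊s⌋₊) (η s)]; linarith
      have h2 : 1/C * dist (σ ((⌊s⌋₊:ℕ):ℝ)) (σ ((⌊t⌋₊:ℕ):ℝ)) - C ≤ dist (q ⌊s⌋₊) (q ⌊t⌋₊) :=
        (hqie _ _).1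
      have h3 : (t - 1) - s ≤ dist (σ ((⌊s⌋₊:ℕ):ℝ)) (σ ((⌊t⌋₊:ℕ):ℝ)) := by
        rw [hσd, abs_sub_comm]
        have e1 : t - 1 ≤ rclamp R ((⌊t⌋₊:ℕ):ℝ) := by
          refine le_trans (le_min ?_ ?_) (le_max_right _ _)
          · linarith [Nat.lt_floor_add_one t]
          · linarith [ht.2, hm1]
        have e2 : rclamp R ((⌊s⌋₊:ℕ):ℝ) ≤ s :=
          (rclamp_le_self (Nat.cast_nonneg _)).trans (Nat.floor_le hs.1)
        calc (t-1) - s ≤ rclamp R ((⌊t⌋₊:ℕ):ℝ) - rclamp R ((⌊s⌋₊:ℕ):ℝ) := by linarith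
          _ ≤ |rclamp R ((⌊t⌋₊:ℕ):ℝ) - rclamp R ((⌊s⌋₊:ℕ):ℝ)| := le_abs_self _
      have hC1 : 1/C ≤ 1 := by rw [div_le_one hC0]; linarith
      have hmono : 1/C * ((t-1) - s) ≤ 1/C * dist (σ ((⌊s⌋₊:ℕ):ℝ)) (σ ((⌊t⌋₊:ℕ):ℝ)) :=
        mul_le_mul_of_nonneg_left h3 (by positivity)
      have hhalf : 1/(2*C) * (t - s) ≤ 1/C * (t - s) :=
        mul_le_mul_of_nonneg_right
          (one_div_le_one_div_of_le hC0 (by linarith)) (by linarith)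
      have hexp : 1/C * ((t-1) - s) = 1/C * (t - s) - 1/C := by ring
      have h1C : 0 < 1/C := by positivity
      nlinarith
    · have := hlip s t hs.1 hst
      nlinarith
  have hqg : IsQuasiGeodesicOn η (Icc 0 (m:ℝ)) (2*C) (8*C) := by
    intro s hs t ht
    rcases le_total s t with h | h
    · have hk := key s t hs ht h
      rw [abs_sub_comm, abs_of_nonneg (by linarith)]
      exact hk
    · have hk := key t s ht hs h
      rw [abs_of_nonneg (by linarith), dist_comm]
      exact hk
  have hη0 : η 0 = G 0 := by
    have e1 : η 0 = c 0 0 := by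
      simp [hηdef]
    rw [e1, hc0 0, hG0, hq]
    norm_num
  have hηm : η (m:ℝ) = G L := by
    have e1 : η (m:ℝ) = c m 0 := by
      simp [hηdef, Nat.floor_natCast]
    have e2 : σ ((m:ℕ):ℝ) = σ R := by
      rw [hσc ((m:ℕ):ℝ)]
      congr 1
      rw [show rclamp R (m:ℝ) = R by simp [rclamp, min_eq_right hm, max_eq_right hR]]
    rw [e1, hc0 m, hGL, hq]
    simp only [e2]
  have hmorse := hGM (2*C) (8*C) (by linarith) (by linarith) η 0 (m:ℝ) (Nat.cast_nonneg m)
    hcont hqg ⟨0, ⟨le_rfl, hL⟩, hη0.symm⟩ ⟨L, ⟨hL, le_rfl⟩, hηm.symm⟩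
  constructor
  · intro r hr
    have hrm : r ∈ Icc 0 (m:ℝ) := ⟨hr.1, hr.2.trans hm⟩
    obtain ⟨s, hsI, hds⟩ := hmorse r hrm
    refine ⟨s, hsI, ?_⟩
    have h1 : dist (ι (σ r)) (η r) ≤ 4*C := by
      have ha : dist (σ r) (σ ((⌊r⌋₊:ℕ):ℝ)) ≤ 1 := by
        refine (hσlip _ _).trans ?_
        rw [abs_of_nonneg (sub_nonneg.2 (Nat.floor_le hr.1))]
        linarith [Nat.lt_floor_add_one r]
      have hb : dist (ι (σ r)) (q ⌊r⌋₊) ≤ 2*C := by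
        calc dist (ι (σ r)) (q ⌊r⌋₊) ≤ C * dist (σ r) (σ ((⌊r⌋₊:ℕ):ℝ)) + C := (hqie _ _).2
          _ ≤ 2*C := by nlinarith
      calc dist (ι (σ r)) (η r) ≤ dist (ι (σ r)) (q ⌊r⌋₊) + dist (q ⌊r⌋₊) (η r) :=
            dist_triangle _ _ _
        _ ≤ 2*C + 2*C := add_le_add hb (by rw [dist_comm]; exact hnearq r hr.1)
        _ = 4*C := by ring
    calc dist (ι (σ r)) (G s) ≤ dist (ι (σ r)) (η r) + dist (η r) (G s) := dist_triangle _ _ _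
      _ ≤ K0 + 4*C := by linarith
  · intro s hsI
    have hGcont : ContinuousOn G (Icc 0 L) := by
      have hl : LipschitzOnWith 1 G (Icc 0 L) := by
        rw [lipschitzOnWith_iff_dist_le_mul]
        intro x hx y hy
        rw [hG x hx y hy, Real.dist_eq]
        simp
      exact hl.continuousOn
    have hsub1 : Icc (0:ℝ) s ⊆ Icc 0 L := Icc_subset_Icc le_rfl hsI.2
    have hsub2 : Icc s L ⊆ Icc 0 L := Icc_subset_Icc hsI.1 le_rfl
    set S1 := G '' Icc 0 s with hS1
    set S2 := G '' Icc s L with hS2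
    have hS1c : IsCompact S1 := isCompact_Icc.image_of_continuousOn (hGcont.mono hsub1)
    have hS2c : IsCompact S2 := isCompact_Icc.image_of_continuousOn (hGcont.mono hsub2)
    have hS1ne : S1.Nonempty := ⟨G s, ⟨s, ⟨hsI.1, le_rfl⟩, rfl⟩⟩
    have hS2ne : S2.Nonempty := ⟨G s, ⟨s, ⟨le_rfl, hsI.2⟩, rfl⟩⟩
    set f : ℝ → ℝ := fun u => infDist (η u) S1 - infDist (η u) S2 with hf
    have hfc : ContinuousOn f (Icc 0 (m:ℝ)) :=
      ((continuous_infDist_pt S1).comp_continuousOn hcont).sub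
        ((continuous_infDist_pt S2).comp_continuousOn hcont)
    have hf0 : f 0 ≤ 0 := by
      have e1 : infDist (η 0) S1 = 0 :=
        infDist_zero_of_mem (by rw [hη0]; exact ⟨0, ⟨le_rfl, hsI.1⟩, rfl⟩)
      simp only [hf, e1]
      linarith [infDist_nonneg (s := S2) (x := η 0)]
    have hfm : 0 ≤ f (m:ℝ) := by
      have e1 : infDist (η (m:ℝ)) S2 = 0 :=
        infDist_zero_of_mem (by rw [hηm]; exact ⟨L, ⟨hsI.2, le_rfl⟩, rfl⟩)
      simp only [hf, e1]
      linarith [infDist_nonneg (s := S1) (x := η (m:ℝ))]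
    have h0m := intermediate_value_Icc (Nat.cast_nonneg m) hfc
    obtain ⟨u, huI, hfu⟩ := h0m ⟨hf0, hfm⟩
    obtain ⟨s'', hs''I, hd''⟩ := hmorse u huI
    have hboth : infDist (η u) S1 ≤ K0 ∧ infDist (η u) S2 ≤ K0 := by
      have heq : infDist (η u) S1 = infDist (η u) S2 := by
        simp only [hf] at hfu; linarith
      rcases le_total s'' s with h | h
      · have h1 : infDist (η u) S1 ≤ K0 :=
          le_trans (infDist_le_dist_of_mem ⟨s'', ⟨hs''I.1, h⟩, rfl⟩) hd''
        exact ⟨h1, heq ▸ h1⟩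
      · have h1 : infDist (η u) S2 ≤ K0 :=
          le_trans (infDist_le_dist_of_mem ⟨s'', ⟨h, hs''I.2⟩, rfl⟩) hd''
        exact ⟨heq ▸ h1, h1⟩
    obtain ⟨x1, hx1, he1⟩ := hS1c.exists_infDist_eq_dist hS1ne (η u)
    obtain ⟨x2, hx2, he2⟩ := hS2c.exists_infDist_eq_dist hS2ne (η u)
    obtain ⟨t1, ht1I, rfl⟩ := hx1
    obtain ⟨t2, ht2I, rfl⟩ := hx2
    have hd1 : dist (η u) (G t1) ≤ K0 := by rw [← he1]; exact hboth.1
    have hd2 : dist (η u) (G t2) ≤ K0 := by rw [← he2]; exact hboth.2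
    have ht1L : t1 ∈ Icc 0 L := hsub1 ht1I
    have ht2L : t2 ∈ Icc 0 L := hsub2 ht2I
    have h12 : |t1 - t2| ≤ 2*K0 := by
      rw [← hG t1 ht1L t2 ht2L]
      calc dist (G t1) (G t2) ≤ dist (G t1) (η u) + dist (η u) (G t2) := dist_triangle _ _ _
        _ ≤ 2*K0 := by rw [dist_comm (G t1) (η u)]; linarith
    have hst1 : dist (G s) (G t1) ≤ 2*K0 := by
      rw [hG s hsI t1 ht1L, abs_of_nonneg (by linarith [ht1I.2])]
      have : t1 - t2 ≤ |t1 - t2| := le_abs_self _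
      have h2' : s ≤ t2 := ht2I.1
      have h1' : t1 ≤ s := ht1I.2
      have : -(2*K0) ≤ t1 - t2 := (abs_le.1 h12).1
      linarith
    have hsu : dist (G s) (η u) ≤ 3*K0 := by
      calc dist (G s) (η u) ≤ dist (G s) (G t1) + dist (G t1) (η u) := dist_triangle _ _ _
        _ ≤ 3*K0 := by rw [dist_comm (η u) (G t1)] at hd1; linarith
    refine ⟨rclamp R ((⌊u⌋₊:ℕ):ℝ), rclamp_mem hR _, ?_⟩
    have hqr : ι (σ (rclamp R ((⌊u⌋₊:ℕ):ℝ))) = q ⌊u⌋₊ := by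
      rw [hq]
      simp only []
      rw [← hσc]
    calc dist (G s) (ι (σ (rclamp R ((⌊u⌋₊:ℕ):ℝ))))
        ≤ dist (G s) (η u) + dist (η u) (ι (σ (rclamp R ((⌊u⌋₊:ℕ):ℝ)))) := dist_triangle _ _ _
      _ ≤ 3*K0 + 2*C := by
          rw [hqr]
          exact add_le_add hsu (hnearq u huI.1)

lemma near_endpoints_morse {X : Type*} [MetricSpace X]
    (hX : GeodesicSpace X)
    (M : ℝ → ℝ → ℝ)
    (G : ℝ → X) (L : ℝ) (hL : 0 ≤ L)
    (hGM : IsMorseWith M G (Icc 0 L))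
    (lam eps : ℝ) (hlam : 1 ≤ lam) (heps : 0 ≤ eps)
    (η : ℝ → X) (a b : ℝ) (hab : a ≤ b)
    (hcont : ContinuousOn η (Icc a b))
    (hqg : IsQuasiGeodesicOn η (Icc a b) lam eps)
    (D' : ℝ) (hD' : 0 ≤ D')
    (t₁ t₂ : ℝ) (ht₁ : t₁ ∈ Icc 0 L) (ht₂ : t₂ ∈ Icc 0 L)
    (h1 : dist (G t₁) (η a) ≤ D') (h2 : dist (η b) (G t₂) ≤ D') :
    ∀ t ∈ Icc a b, ∃ s ∈ Icc 0 L, dist (η t) (G s) ≤ M lam (eps + 4*D') := by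
  classical
  have hlam0 : (0:ℝ) < lam := lt_of_lt_of_le one_pos hlam
  obtain ⟨τ₁, hτ₁0, hτ₁P, hτ₁iso, hτ₁lip, hτ₁c⟩ := exists_geodesic hX (G t₁) (η a)
  obtain ⟨τ₂, hτ₂0, hτ₂Q, hτ₂iso, hτ₂lip, hτ₂c⟩ := exists_geodesic hX (η b) (G t₂)
  set P := dist (G t₁) (η a) with hPdef
  set Q := dist (η b) (G t₂) with hQdef
  have hP0 : 0 ≤ P := dist_nonneg
  have hQ0 : 0 ≤ Q := dist_nonneg
  have hPD : P ≤ D' := h1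
  have hQD : Q ≤ D' := h2
  set η' : ℝ → X := fun u =>
    if u ≤ a then τ₁ (u - (a - P))
    else if u ≤ b then η (max a (min u b))
    else τ₂ (u - b) with hη'def
  -- η' agrees with η on [a,b]
  have eB : ∀ u ∈ Icc a b, η' u = η u := by
    intro u hu
    by_cases h : u ≤ a
    · have hua : u = a := le_antisymm h hu.1
      subst hua
      simp only [hη'def]
      rw [if_pos (le_refl u), show u - (u - P) = P from by ring, hτ₁P]
    · simp only [hη'def, if_neg h, if_pos hu.2]
      rw [min_eq_left hu.2, max_eq_right hu.1]
  -- left tail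
  have eA : ∀ u ∈ Icc (a - P) a, dist (η' u) (η a) = a - u := by
    intro u hu
    have h : u ≤ a := hu.2
    simp only [hη'def, if_pos h]
    rw [← hτ₁P]
    rw [hτ₁iso _ ⟨by linarith [hu.1], by linarith [hu.2]⟩ _ ⟨hP0, le_rfl⟩]
    rw [abs_of_nonpos (by linarith)]; ring
  have eA2 : ∀ u ∈ Icc (a - P) a, ∀ v ∈ Icc (a - P) a, dist (η' u) (η' v) = |u - v| := by
    intro u hu v hv
    simp only [hη'def, if_pos hu.2, if_pos hv.2]
    rw [hτ₁iso _ ⟨by linarith [hu.1], by linarith [hu.2]⟩ _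
      ⟨by linarith [hv.1], by linarith [hv.2]⟩]
    congr 1; ring
  have eC : ∀ u ∈ Icc b (b + Q), dist (η' u) (η b) = u - b := by
    intro u hu
    by_cases h : u ≤ b
    · have hub : u = b := le_antisymm h hu.1
      rw [hub, eB b ⟨hab, le_rfl⟩, dist_self]; ring
    · simp only [hη'def, if_neg (by linarith : ¬ u ≤ a), if_neg h]
      rw [← hτ₂0]
      rw [hτ₂iso _ ⟨by linarith [hu.1], by linarith [hu.2]⟩ _ ⟨le_rfl, hQ0⟩]
      rw [abs_of_nonneg (by linarith)]; ring
  have eC2 : ∀ u ∈ Icc b (b + Q), ∀ v ∈ Icc b (b + Q), dist (η' u) (η' v) = |u - v| := by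
    intro u hu v hv
    have hη'b : η' b = η b := eB b ⟨hab, le_rfl⟩
    rcases eq_or_lt_of_le hu.1 with hub | hub
    · rcases eq_or_lt_of_le hv.1 with hvb | hvb
      · rw [← hub, ← hvb, dist_self, sub_self, abs_zero]
      · rw [← hub, hη'b, dist_comm, eC v hv, abs_sub_comm, abs_of_nonneg (by linarith)]
    · rcases eq_or_lt_of_le hv.1 with hvb | hvb
      · rw [← hvb, hη'b, eC u hu, abs_of_nonneg (by linarith)]
      · simp only [hη'def, if_neg (by linarith : ¬ u ≤ a), if_neg (by linarith : ¬ u ≤ b),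
          if_neg (by linarith : ¬ v ≤ a), if_neg (by linarith : ¬ v ≤ b)]
        rw [hτ₂iso _ ⟨by linarith [hu.1], by linarith [hu.2]⟩ _
          ⟨by linarith [hv.1], by linarith [hv.2]⟩]
        congr 1; ring
  -- continuity
  have hcont' : Continuous η' := by
    have hc1 : Continuous fun u : ℝ => τ₁ (u - (a - P)) := by
      have hl : LipschitzWith 1 τ₁ := by
        apply LipschitzWith.of_dist_le_mul
        intro x y; simpa [Real.dist_eq] using hτ₁lip x y
      exact hl.continuous.comp (continuous_id.sub continuous_const)
    have hc3 : Continuous fun u : ℝ => τ₂ (u - b) := by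
      have hl : LipschitzWith 1 τ₂ := by
        apply LipschitzWith.of_dist_le_mul
        intro x y; simpa [Real.dist_eq] using hτ₂lip x y
      exact hl.continuous.comp (continuous_id.sub continuous_const)
    have hc2 : Continuous fun u : ℝ => η (max a (min u b)) := by
      apply hcont.comp_continuous
        (continuous_const.max (continuous_id.min continuous_const))
      intro x
      exact ⟨le_max_left _ _, max_le hab (min_le_right _ _)⟩
    have hinner : Continuous fun u : ℝ => if u ≤ b then η (max a (min u b)) else τ₂ (u - b) := by
      apply Continuous.if_le hc2 hc3 continuous_id' continuous_const
      intro x hx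
      rw [hx, min_self, max_eq_right hab, sub_self, hτ₂0]
    apply Continuous.if_le hc1 hinner continuous_id' continuous_const
    intro x hx
    rw [hx, if_pos hab, show a - (a - P) = P from by ring, hτ₁P, min_eq_left hab, max_self]
  -- quasi-geodesic property of η'
  have key : ∀ s t : ℝ, s ∈ Icc (a - P) (b + Q) → t ∈ Icc (a - P) (b + Q) → s ≤ t →
      1/lam * (t - s) - (eps + 4*D') ≤ dist (η' s) (η' t) ∧
      dist (η' s) (η' t) ≤ lam * (t - s) + (eps + 4*D') := by
    intro s t hs ht hst
    have hinv1 : 1/lam ≤ 1 := by rw [div_le_one hlam0]; exact hlam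
    have hinv0 : 0 < 1/lam := by positivity
    rcases le_or_gt s a with hsa | hsa
    · rcases le_or_gt t a with hta | hta
      · -- both in left tail
        have e := eA2 s ⟨hs.1, hsa⟩ t ⟨by linarith [ht.1, hP0, hQ0], hta⟩
        rw [e, abs_sub_comm, abs_of_nonneg (by linarith)]
        constructor
        · nlinarith
        · nlinarith
      · rcases le_or_gt t b with htb | htb
        · -- s in left tail, t in middle
          have hta' : a ≤ t := hta.le
          have es := eA s ⟨hs.1, hsa⟩
          have et := eB t ⟨hta', htb⟩
          have hq := hqg a ⟨le_rfl, hab⟩ t ⟨hta', htb⟩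
          rw [abs_sub_comm, abs_of_nonneg (by linarith)] at hq
          have htr1 : dist (η' s) (η' t) ≤ dist (η' s) (η a) + dist (η a) (η t) := by
            rw [et]; exact dist_triangle _ _ _
          have htr2 : dist (η a) (η t) - dist (η' s) (η a) ≤ dist (η' s) (η' t) := by
            rw [et]
            have := dist_triangle (η a) (η' s) (η t)
            rw [dist_comm (η a) (η' s)] at this
            linarith
          rw [es] at htr1 htr2
          have hsaP : a - s ≤ D' := by linarith [hs.1]
          constructor
          · have hlow : 1/lam * (t - a) - eps ≤ dist (η a) (η t) := hq.1
            have : 1/lam * (t - s) ≤ 1/lam * (t - a) + D' := by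
              have : 1/lam * (t - s) - 1/lam * (t - a) = 1/lam * (a - s) := by ring
              nlinarith
            linarith
          · have hup : dist (η a) (η t) ≤ lam * (t - a) + eps := hq.2
            nlinarith
        · -- s in left tail, t in right tail
          have es := eA s ⟨hs.1, hsa⟩
          have et := eC t ⟨htb.le, ht.2⟩
          have hq := hqg a ⟨le_rfl, hab⟩ b ⟨hab, le_rfl⟩
          rw [abs_sub_comm, abs_of_nonneg (by linarith)] at hq
          have hsaP : a - s ≤ D' := by linarith [hs.1]
          have htbQ : t - b ≤ D' := by linarith [ht.2]
          have htr1 : dist (η' s) (η' t) ≤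
              dist (η' s) (η a) + dist (η a) (η b) + dist (η b) (η' t) := dist_triangle4 _ _ _ _
          have htr2 : dist (η a) (η b) - dist (η' s) (η a) - dist (η b) (η' t) ≤
              dist (η' s) (η' t) := by
            have k1 := dist_triangle (η a) (η' s) (η b)
            have k2 := dist_triangle (η' s) (η' t) (η b)
            rw [dist_comm (η a) (η' s)] at k1
            rw [dist_comm (η' t) (η b)] at k2
            linarith
          rw [es] at htr1 htr2
          rw [dist_comm (η b) (η' t), et] at htr1 htr2
          constructor
          · have hlow : 1/lam * (b - a) - eps ≤ dist (η a) (η b) := hq.1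
            have e2 : 1/lam * (t - s) ≤ 1/lam * (b - a) + 2*D' := by
              have : 1/lam * (t - s) - 1/lam * (b - a) = 1/lam * ((a - s) + (t - b)) := by ring
              nlinarith
            linarith
          · have hup : dist (η a) (η b) ≤ lam * (b - a) + eps := hq.2
            nlinarith
    · rcases le_or_gt t b with htb | htb
      · -- both in middle
        have hsb : s ≤ b := by linarith
        have es := eB s ⟨hsa.le, hsb⟩
        have et := eB t ⟨by linarith, htb⟩
        have hq := hqg s ⟨hsa.le, hsb⟩ t ⟨by linarith, htb⟩
        rw [abs_sub_comm, abs_of_nonneg (by linarith)] at hq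
        rw [es, et]
        constructor
        · linarith [hq.1]
        · linarith [hq.2]
      · rcases le_or_gt s b with hsb | hsb
        · -- s in middle, t in right tail
          have es := eB s ⟨hsa.le, hsb⟩
          have et := eC t ⟨htb.le, ht.2⟩
          have hq := hqg s ⟨hsa.le, hsb⟩ b ⟨hab, le_rfl⟩
          rw [abs_sub_comm, abs_of_nonneg (by linarith)] at hq
          have htbQ : t - b ≤ D' := by linarith [ht.2]
          have htr1 : dist (η' s) (η' t) ≤ dist (η s) (η b) + dist (η b) (η' t) := by
            rw [es]; exact dist_triangle _ _ _
          have htr2 : dist (η s) (η b) - dist (η b) (η' t) ≤ dist (η' s) (η' t) := by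
            have k := dist_triangle (η s) (η' t) (η b)
            rw [dist_comm (η' t) (η b)] at k
            rw [es]
            linarith
          rw [dist_comm (η b) (η' t), et] at htr1 htr2
          constructor
          · have hlow : 1/lam * (b - s) - eps ≤ dist (η s) (η b) := hq.1
            have e2 : 1/lam * (t - s) ≤ 1/lam * (b - s) + D' := by
              have : 1/lam * (t - s) - 1/lam * (b - s) = 1/lam * (t - b) := by ring
              nlinarith
            linarith
          · have hup : dist (η s) (η b) ≤ lam * (b - s) + eps := hq.2
            nlinarith
        · -- both in right tail
          have e := eC2 s ⟨hsb.le, by linarith [hs.2]⟩ t ⟨by linarith, ht.2⟩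
          rw [e, abs_sub_comm, abs_of_nonneg (by linarith)]
          constructor
          · nlinarith
          · nlinarith
  have hqg' : IsQuasiGeodesicOn η' (Icc (a - P) (b + Q)) lam (eps + 4*D') := by
    intro s hs t ht
    rcases le_total s t with h | h
    · have hk := key s t hs ht h
      rw [abs_sub_comm, abs_of_nonneg (by linarith)]
      exact hk
    · have hk := key t s ht hs h
      rw [abs_of_nonneg (by linarith), dist_comm]
      exact hk
  have hend1 : η' (a - P) ∈ G '' Icc 0 L := by
    refine ⟨t₁, ht₁, ?_⟩
    simp only [hη'def, if_pos (by linarith : a - P ≤ a)]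
    rw [show a - P - (a - P) = (0:ℝ) from by ring, hτ₁0]
  have hend2 : η' (b + Q) ∈ G '' Icc 0 L := by
    refine ⟨t₂, ht₂, ?_⟩
    rcases eq_or_lt_of_le hQ0 with hq0 | hq0
    · have : η' (b + Q) = η b := by
        have := eC (b + Q) ⟨by linarith, le_rfl⟩
        have hd0 : dist (η' (b + Q)) (η b) = 0 := by rw [this]; linarith
        exact dist_eq_zero.1 hd0
      rw [this]
      have : dist (η b) (G t₂) = 0 := by rw [← hQdef, ← hq0]
      exact (dist_eq_zero.1 this).symm
    · simp only [hη'def, if_neg (by linarith : ¬ b + Q ≤ a), if_neg (by linarith : ¬ b + Q ≤ b)]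
      rw [show b + Q - b = Q from by ring, hτ₂Q]
  have happ := hGM lam (eps + 4*D') hlam (by linarith) η' (a - P) (b + Q)
    (by linarith) hcont'.continuousOn hqg' hend1 hend2
  intro t ht
  obtain ⟨s, hsI, hds⟩ := happ t ⟨by linarith [ht.1], by linarith [ht.2]⟩
  refine ⟨s, hsI, ?_⟩
  rw [eB t ht] at hds
  exact hds

/-- Let `Y` (standing for the finitely generated subgroup `H` with its word
metric) be a proper geodesic space with a geometric action of a group `H`, quasi-isometrically
embedded (undistorted) via an equivariant map `ι` into the proper geodesic space `X`
(standing for the Cayley graph of `G`, on which `H` also acts by isometries).  If the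
relative Morse boundary is empty — no geodesic ray of `Y` remains Morse in `X` — then for
every Morse gauge `M` there is `D` such that any two points of `ι Y` joined by an `M`-Morse
geodesic of `X` are at distance at most `D`. -/
theorem statement15 {X : Type u} {Y : Type u} [MetricSpace X] [MetricSpace Y]
    [ProperSpace X] [ProperSpace Y]
    (hX : GeodesicSpace X) (hY : GeodesicSpace Y)
    (H : Type u) [Group H] [MulAction H X] [MulAction H Y]
    (hHX : ∀ h : H, Isometry (fun x : X => h • x))
    (hHY : ∀ h : H, Isometry (fun y : Y => h • y))
    (y₀ : Y) (ι : Y → X)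
    (hequiv : ∀ (h : H) (y : Y), ι (h • y) = h • ι y)
    (C : ℝ) (hC : 1 ≤ C)
    (hqie : ∀ y₁ y₂ : Y,
      (1 / C) * dist y₁ y₂ - C ≤ dist (ι y₁) (ι y₂) ∧
      dist (ι y₁) (ι y₂) ≤ C * dist y₁ y₂ + C)
    (hcobounded : ∀ y : Y, ∃ h : H, dist (h • y₀) y ≤ C)
    (hrel : ¬ ∃ (γ : ℝ → Y) (N : ℝ → ℝ → ℝ), IsMorseGauge N ∧
      IsGeodesicOn γ (Ici 0) ∧ IsMorseWith N (fun r => ι (γ r)) (Ici 0))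
    (M : ℝ → ℝ → ℝ) (hM : IsMorseGauge M) :
    ∃ D : ℝ, ∀ (y₁ y₂ : Y) (g : ℝ → X) (L : ℝ), 0 ≤ L →
      g 0 = ι y₁ → g L = ι y₂ →
      IsGeodesicOn g (Icc 0 L) → IsMorseWith M g (Icc 0 L) →
      dist (ι y₁) (ι y₂) ≤ D := by
  classical
  by_contra hcon
  push_neg at hcon
  have hC0 : (0:ℝ) < C := lt_of_lt_of_le one_pos hC
  set K0 := M (2*C) (8*C) with hK0def
  have hK0 : 0 ≤ K0 := hM.1 _ _ (by linarith) (by linarith)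
  set D0 : ℝ := K0 + 6*C with hD0def
  have hD0 : 0 ≤ D0 := by simp only [hD0def]; linarith
  set K1 : ℝ := 3*K0 + 2*C with hK1def
  have hK1 : 0 ≤ K1 := by simp only [hK1def]; linarith
  -- extract sequences
  choose y1 y2 g Ln hLn hg0 hgL hgeo hmorse hbig using fun n : ℕ => hcon n
  choose hh hhy using fun n => hcobounded (y1 n)
  set z1 : ℕ → Y := fun n => (hh n)⁻¹ • y1 n with hz1
  set z2 : ℕ → Y := fun n => (hh n)⁻¹ • y2 n with hz2
  choose σ hσ0 hσR hσgeo hσlip hσc using fun n => exists_geodesic hY (z1 n) (z2 n)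
  set R : ℕ → ℝ := fun n => dist (z1 n) (z2 n) with hRdef
  have hR0 : ∀ n, 0 ≤ R n := fun n => dist_nonneg
  set Gn : ℕ → ℝ → X := fun n t => (hh n)⁻¹ • g n t with hGndef
  have hdX : ∀ (h : H) (x x' : X), dist (h • x) (h • x') = dist x x' :=
    fun h x x' => (hHX h).dist_eq x x'
  have hdY : ∀ (h : H) (y y' : Y), dist (h • y) (h • y') = dist y y' :=
    fun h y y' => (hHY h).dist_eq y y'
  have hRy : ∀ n, R n = dist (y1 n) (y2 n) := by
    intro n
    simp only [hRdef, hz1, hz2]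
    exact hdY _ _ _
  have hRn : ∀ n : ℕ, (n:ℝ) ≤ C * R n + C := by
    intro n
    have h1 : (n:ℝ) < dist (ι (y1 n)) (ι (y2 n)) := hbig n
    have h2 := (hqie (y1 n) (y2 n)).2
    rw [hRy n]; linarith
  have hbase : ∀ n, dist (σ n 0) y₀ ≤ C := by
    intro n
    rw [hσ0 n]
    have e1 : dist (z1 n) y₀ = dist (y1 n) (hh n • y₀) := by
      rw [← hdY (hh n) (z1 n) y₀]
      simp only [hz1, smul_inv_smul]
    rw [e1, dist_comm]; exact hhy n
  have hGn0 : ∀ n, Gn n 0 = ι (σ n 0) := by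
    intro n
    rw [hσ0 n]
    simp only [hGndef, hz1]
    rw [hg0 n, hequiv]
  have hGnL : ∀ n, Gn n (Ln n) = ι (σ n (R n)) := by
    intro n
    rw [hσR n]
    simp only [hGndef, hz2]
    rw [hgL n, hequiv]
  have hGngeo : ∀ n, ∀ s ∈ Icc (0:ℝ) (Ln n), ∀ t ∈ Icc (0:ℝ) (Ln n),
      dist (Gn n s) (Gn n t) = |s - t| := by
    intro n s hs t ht
    simp only [hGndef]
    rw [hdX]
    exact hgeo n s hs t ht
  have hGnM : ∀ n, IsMorseWith M (Gn n) (Icc 0 (Ln n)) := by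
    intro n lam eps hlam heps η a b hab hcont hqg ha hb t ht
    have hcont2 : ContinuousOn (fun u => hh n • η u) (Icc a b) :=
      (hHX (hh n)).continuous.comp_continuousOn hcont
    have hqg2 : IsQuasiGeodesicOn (fun u => hh n • η u) (Icc a b) lam eps := by
      intro u hu v hv
      have := hqg u hu v hv
      simpa only [hdX] using this
    have ha2 : (fun u => hh n • η u) a ∈ g n '' Icc 0 (Ln n) := by
      obtain ⟨s, hsI, hse⟩ := ha
      refine ⟨s, hsI, ?_⟩
      simp only
      rw [← hse]
      simp only [hGndef, smul_inv_smul]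
    have hb2 : (fun u => hh n • η u) b ∈ g n '' Icc 0 (Ln n) := by
      obtain ⟨s, hsI, hse⟩ := hb
      refine ⟨s, hsI, ?_⟩
      simp only
      rw [← hse]
      simp only [hGndef, smul_inv_smul]
    obtain ⟨s, hsI, hsd⟩ := hmorse n lam eps hlam heps (fun u => hh n • η u) a b hab
      hcont2 hqg2 ha2 hb2 t ht
    refine ⟨s, hsI, ?_⟩
    have e1 : dist (η t) (Gn n s) = dist (hh n • η t) (g n s) := by
      simp only [hGndef]
      rw [← hdX (hh n) (η t) ((hh n)⁻¹ • g n s), smul_inv_smul]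
    rw [e1]
    exact hsd
  have hdots := fun n => dots_lemma hX ι C hC hqie M (σ n) (R n) (hR0 n) (hσc n) (hσgeo n)
    (Gn n) (Ln n) (hLn n) (hGngeo n) (hGnM n) (hGn0 n) (hGnL n)
  have hA := fun n => (hdots n).1
  have hB := fun n => (hdots n).2
  -- ultrafilter limit
  let U : Ultrafilter ℕ := Ultrafilter.of Filter.atTop
  have hU : (U : Filter ℕ) ≤ Filter.atTop := Ultrafilter.of_le _
  have hUtop : ∀ T : ℝ, ∀ᶠ n in (U : Filter ℕ), T ≤ R n := by
    intro T
    apply Filter.Eventually.filter_mono hU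
    have h1 : ∀ᶠ n : ℕ in Filter.atTop, C*T + C ≤ (n:ℝ) :=
      (tendsto_natCast_atTop_atTop (R := ℝ)).eventually_ge_atTop (C*T + C)
    refine h1.mono (fun n hn => ?_)
    have h2 := hRn n
    have h3 : C * T ≤ C * R n := by linarith
    exact le_of_mul_le_mul_left h3 hC0
  have hcompact : ∀ t : ℝ, ∃ x : Y, Filter.Tendsto (fun n => σ n t) (U : Filter ℕ) (𝓝 x) := by
    intro t
    have hmem : ∀ n, σ n t ∈ closedBall y₀ (|t| + C) := by
      intro n
      rw [mem_closedBall]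
      calc dist (σ n t) y₀ ≤ dist (σ n t) (σ n 0) + dist (σ n 0) y₀ := dist_triangle _ _ _
        _ ≤ |t - 0| + C := add_le_add (hσlip n t 0) (hbase n)
        _ = |t| + C := by rw [sub_zero]
    have hle : (Ultrafilter.map (fun n => σ n t) U : Filter Y) ≤ 𝓟 (closedBall y₀ (|t| + C)) := by
      rw [Filter.le_principal_iff, Ultrafilter.coe_map, Filter.mem_map]
      exact Filter.univ_mem' hmem
    obtain ⟨x, -, hx⟩ := (isCompact_closedBall y₀ (|t| + C)).ultrafilter_le_nhds _ hle
    exact ⟨x, (Ultrafilter.coe_map _ _) ▸ hx⟩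
  choose γ hγ using hcompact
  have hγgeo : ∀ s ∈ Ici (0:ℝ), ∀ t ∈ Ici (0:ℝ), dist (γ s) (γ t) = |s - t| := by
    intro s hs t ht
    rw [mem_Ici] at hs ht
    have h1 : Filter.Tendsto (fun n => dist (σ n s) (σ n t)) (U:Filter ℕ)
        (𝓝 (dist (γ s) (γ t))) := (hγ s).dist (hγ t)
    have h2 : ∀ᶠ n in (U:Filter ℕ), dist (σ n s) (σ n t) = |s - t| := by
      filter_upwards [hUtop (max s t)] with n hn
      exact hσgeo n s ⟨hs, le_trans (le_max_left s t) hn⟩ t ⟨ht, le_trans (le_max_right s t) hn⟩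
    exact tendsto_nhds_unique (h1.congr' h2) tendsto_const_nhds
  have happrox : ∀ T : ℝ, 0 ≤ T → ∀ᶠ n in (U:Filter ℕ),
      ∀ r ∈ Icc (0:ℝ) T, dist (σ n r) (γ r) ≤ 1 := by
    intro T hT
    have hgrid : ∀ᶠ n in (U:Filter ℕ), ∀ j ∈ Finset.range (⌊4*T⌋₊ + 1),
        dist (σ n ((j:ℝ)/4)) (γ ((j:ℝ)/4)) ≤ 1/4 := by
      rw [Filter.eventually_all_finset]
      intro j hj
      have h1 := (hγ ((j:ℝ)/4)).eventually
        (Metric.closedBall_mem_nhds (γ ((j:ℝ)/4)) (by norm_num : (0:ℝ) < 1/4))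
      filter_upwards [h1] with n hn
      exact mem_closedBall.mp hn
    filter_upwards [hgrid] with n hn r hr
    set j : ℕ := ⌊4*r⌋₊ with hjdef
    have hj4 : (j:ℝ) ≤ 4*r := Nat.floor_le (by linarith [hr.1])
    have hj4' : 4*r < (j:ℝ)+1 := Nat.lt_floor_add_one _
    have hjmem : j ∈ Finset.range (⌊4*T⌋₊ + 1) := by
      rw [Finset.mem_range, Nat.lt_add_one_iff]
      exact Nat.floor_le_floor (by linarith [hr.2])
    have hd1 : dist (σ n r) (σ n ((j:ℝ)/4)) ≤ 1/4 := by
      refine (hσlip n _ _).trans ?_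
      rw [abs_of_nonneg (by linarith)]
      linarith
    have hd3 : dist (γ ((j:ℝ)/4)) (γ r) ≤ 1/4 := by
      rw [hγgeo _ (mem_Ici.2 (by positivity)) _ (mem_Ici.2 hr.1)]
      rw [abs_of_nonpos (by linarith)]; linarith
    calc dist (σ n r) (γ r) ≤ dist (σ n r) (σ n ((j:ℝ)/4)) +
        dist (σ n ((j:ℝ)/4)) (γ ((j:ℝ)/4)) + dist (γ ((j:ℝ)/4)) (γ r) := dist_triangle4 _ _ _ _
      _ ≤ 1/4 + 1/4 + 1/4 := add_le_add (add_le_add hd1 (hn j hjmem)) hd3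
      _ ≤ 1 := by norm_num
  -- the Morse gauge for the limit ray
  set N : ℝ → ℝ → ℝ := fun l e => M l (e + 4*D0) + K1 + 2*C with hNdef
  have hNgauge : IsMorseGauge N := by
    refine ⟨?_, ?_, ?_⟩
    · intro l e hl he
      have := hM.1 l (e + 4*D0) hl (by linarith)
      simp only [hNdef]; linarith
    · intro l l' e e' hl he hll hee
      have := hM.2.1 l l' (e + 4*D0) (e' + 4*D0) hl (by linarith) hll (by linarith)
      simp only [hNdef]; linarith
    · intro l hl
      have hcmp : ContinuousOn ((fun e => M l e) ∘ (fun e => e + 4*D0)) (Ici 0) := by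
        apply (hM.2.2 l hl).comp
        · exact (continuous_id.add continuous_const).continuousOn
        · intro e he
          simp only [mem_Ici] at he ⊢
          linarith
      have h1 : ContinuousOn (fun e => M l (e + 4*D0)) (Ici 0) := hcmp
      simp only [hNdef]
      exact (h1.add continuousOn_const).add continuousOn_const
  -- the limit ray is N-Morse
  have hγM : IsMorseWith N (fun r => ι (γ r)) (Ici 0) := by
    intro lam eps hlam heps η a b hab hcont hqg hea heb t ht
    obtain ⟨s1, hs1, hes1⟩ := hea
    obtain ⟨s2, hs2, hes2⟩ := heb
    rw [mem_Ici] at hs1 hs2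
    simp only at hes1 hes2
    have hlam0 : (0:ℝ) < lam := lt_of_lt_of_le one_pos hlam
    have hMle : 0 ≤ M lam (eps + 4*D0) := hM.1 _ _ hlam (by linarith)
    set Δ := lam * (b - a) + eps with hΔdef
    have hΔ0 : 0 ≤ Δ := by
      simp only [hΔdef]; nlinarith
    set B1 : ℝ := C * (K1 + M lam (eps + 4*D0) + Δ + (C*s1 + C) + 2*C) + C*C with hB1def
    have hB10 : 0 ≤ B1 := by
      simp only [hB1def]
      have : 0 ≤ K1 + M lam (eps + 4*D0) + Δ + (C*s1 + C) + 2*C := by nlinarith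
      nlinarith
    set T : ℝ := B1 + s1 + s2 with hTdef
    have hT0 : 0 ≤ T := by simp only [hTdef]; linarith
    obtain ⟨n, hn⟩ := (happrox T hT0).exists
    have hnear : ∀ s : ℝ, 0 ≤ s → s ≤ T →
        ∃ t' ∈ Icc (0:ℝ) (Ln n), dist (Gn n t') (ι (γ s)) ≤ D0 := by
      intro s hs hsT
      have h1 : dist (ι (γ s)) (ι (σ n s)) ≤ 2*C := by
        have h2 := hn s ⟨hs, hsT⟩
        have h3 : dist (γ s) (σ n s) ≤ 1 := by rw [dist_comm]; exact h2
        calc dist (ι (γ s)) (ι (σ n s)) ≤ C * dist (γ s) (σ n s) + C := (hqie _ _).2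
          _ ≤ 2*C := by nlinarith
      obtain ⟨t', ht'I, ht'd⟩ := hA n (rclamp (R n) s) (rclamp_mem (hR0 n) s)
      refine ⟨t', ht'I, ?_⟩
      have hc : σ n s = σ n (rclamp (R n) s) := hσc n s
      calc dist (Gn n t') (ι (γ s)) ≤ dist (Gn n t') (ι (σ n (rclamp (R n) s))) +
          dist (ι (σ n (rclamp (R n) s))) (ι (γ s)) := dist_triangle _ _ _
        _ ≤ (K0 + 4*C) + 2*C := add_le_add (by rw [dist_comm]; exact ht'd)
            (by rw [← hc, dist_comm]; exact h1)
        _ = D0 := by simp only [hD0def]; ring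
    have hs1T : s1 ≤ T := by simp only [hTdef]; linarith
    have hs2T : s2 ≤ T := by simp only [hTdef]; linarith
    obtain ⟨t1', ht1'I, ht1'd⟩ := hnear s1 hs1 hs1T
    obtain ⟨t2', ht2'I, ht2'd⟩ := hnear s2 hs2 hs2T
    have he1 : dist (Gn n t1') (η a) ≤ D0 := by rw [← hes1]; exact ht1'd
    have he2 : dist (η b) (Gn n t2') ≤ D0 := by rw [← hes2, dist_comm]; exact ht2'd
    have hmain := near_endpoints_morse hX M (Gn n) (Ln n) (hLn n) (hGnM n) lam eps hlam heps
      η a b hab hcont hqg D0 hD0 t1' t2' ht1'I ht2'I he1 he2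
    obtain ⟨s', hs'I, hs'd⟩ := hmain t ht
    obtain ⟨r, hrI, hrd⟩ := hB n s' hs'I
    -- bound r
    have hσr0 : dist (σ n r) (σ n 0) = r := by
      rw [hσgeo n r hrI 0 ⟨le_rfl, hR0 n⟩, sub_zero, abs_of_nonneg hrI.1]
    have hrle : r ≤ C * dist (ι (σ n r)) (ι (σ n 0)) + C*C := by
      have h1 := (hqie (σ n r) (σ n 0)).1
      rw [hσr0] at h1
      have h2 : (1/C) * r ≤ dist (ι (σ n r)) (ι (σ n 0)) + C := by linarith
      have h3 : C * ((1/C) * r) ≤ C * (dist (ι (σ n r)) (ι (σ n 0)) + C) :=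
        mul_le_mul_of_nonneg_left h2 hC0.le
      have h4 : C * ((1/C) * r) = r := by field_simp
      linarith [h3, h4.symm.le]
    have d1 : dist (ι (σ n r)) (η t) ≤ K1 + M lam (eps + 4*D0) := by
      calc dist (ι (σ n r)) (η t) ≤ dist (ι (σ n r)) (Gn n s') + dist (Gn n s') (η t) :=
            dist_triangle _ _ _
        _ ≤ K1 + M lam (eps + 4*D0) := by
            rw [dist_comm (ι (σ n r)) (Gn n s'), dist_comm (Gn n s') (η t)]
            exact add_le_add hrd hs'd
    have d2 : dist (η t) (η a) ≤ Δ := by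
      have h1 := (hqg t ht a ⟨le_rfl, hab⟩).2
      rw [abs_of_nonneg (by linarith [ht.1])] at h1
      have h2 : lam * (t - a) ≤ lam * (b - a) :=
        mul_le_mul_of_nonneg_left (by linarith [ht.2]) hlam0.le
      simp only [hΔdef]; linarith
    have d3 : dist (η a) (ι (γ 0)) ≤ C*s1 + C := by
      rw [← hes1, dist_comm]
      calc dist (ι (γ 0)) (ι (γ s1)) ≤ C * dist (γ 0) (γ s1) + C := (hqie _ _).2
        _ = C * s1 + C := by
            rw [hγgeo 0 (mem_Ici.2 le_rfl) s1 (mem_Ici.2 hs1), abs_sub_comm, sub_zero,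
              abs_of_nonneg hs1]
    have d4 : dist (ι (γ 0)) (ι (σ n 0)) ≤ 2*C := by
      have h0 := hn 0 ⟨le_rfl, hT0⟩
      have h3 : dist (γ 0) (σ n 0) ≤ 1 := by rw [dist_comm]; exact h0
      calc dist (ι (γ 0)) (ι (σ n 0)) ≤ C * dist (γ 0) (σ n 0) + C := (hqie _ _).2
        _ ≤ 2*C := by nlinarith
    have hchain : dist (ι (σ n r)) (ι (σ n 0)) ≤
        K1 + M lam (eps + 4*D0) + Δ + (C*s1 + C) + 2*C := by
      calc dist (ι (σ n r)) (ι (σ n 0)) ≤ dist (ι (σ n r)) (η t) + dist (η t) (ι (σ n 0)) :=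
            dist_triangle _ _ _
        _ ≤ dist (ι (σ n r)) (η t) + (dist (η t) (η a) + dist (η a) (ι (γ 0)) +
            dist (ι (γ 0)) (ι (σ n 0))) := by
              linarith [dist_triangle4 (η t) (η a) (ι (γ 0)) (ι (σ n 0))]
        _ ≤ K1 + M lam (eps + 4*D0) + Δ + (C*s1 + C) + 2*C := by linarith
    have hrT : r ≤ T := by
      have h5 : C * dist (ι (σ n r)) (ι (σ n 0)) ≤
          C * (K1 + M lam (eps + 4*D0) + Δ + (C*s1 + C) + 2*C) :=
        mul_le_mul_of_nonneg_left hchain hC0.le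
      simp only [hTdef, hB1def]
      linarith
    have hfin1 : dist (ι (σ n r)) (ι (γ r)) ≤ 2*C := by
      have h0 := hn r ⟨hrI.1, hrT⟩
      calc dist (ι (σ n r)) (ι (γ r)) ≤ C * dist (σ n r) (γ r) + C := (hqie _ _).2
        _ ≤ 2*C := by nlinarith
    refine ⟨r, mem_Ici.2 hrI.1, ?_⟩
    simp only [hNdef]
    calc dist (η t) (ι (γ r)) ≤ dist (η t) (Gn n s') + dist (Gn n s') (ι (σ n r)) +
        dist (ι (σ n r)) (ι (γ r)) := dist_triangle4 _ _ _ _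
      _ ≤ M lam (eps + 4*D0) + K1 + 2*C := by linarith
  exact hrel ⟨γ, N, hNgauge, hγgeo, hγM⟩
end

section
/- Let X be a geodesic metric space and let γ₁, γ₂ be M-Morse geodesics in X starting at the same basepoint. Suppose there is a subset W ⊆ X and D ≥ 0 such that any geodesic with both endpoints in W and which is f₁²(M)-Morse has length at most D (where f₁ is the universal triangle/Morse function), and suppose γ₁(t₁), γ₂(t₂) ∈ W. Then d(γ₁(s), γ₂(s)) ≤ D₇(M, D) for all 0 ≤ s ≤ max{t₁, t₂}, where D₇ depends only on M and D. -/
open Set Metric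

universe u

/-- abstract join lemma, cf. Lemma 3.25: Given the universal function `f₁`
(controlling triangles and subsegments of Morse geodesics), there is
`D₇ : 𝓜 × ℝ → ℝ` such that: if `γ₁, γ₂` are `M`-Morse geodesic rays from the same
basepoint, `W ⊆ X` is such that every `f₁² M`-Morse geodesic with both endpoints in `W` has
length at most `D`, and `γ₁ t₁, γ₂ t₂ ∈ W`, then `d(γ₁ s, γ₂ s) ≤ D₇ M D` for all
`0 ≤ s ≤ max t₁ t₂`. -/
theorem statement16
    (f₁ : (ℝ → ℝ → ℝ) → (ℝ → ℝ → ℝ))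
    (hgauge : ∀ M, IsMorseGauge M → IsMorseGauge (f₁ M))
    (hsub : ∀ (X : Type u) [inst : MetricSpace X], GeodesicSpace X →
      ∀ (M : ℝ → ℝ → ℝ), IsMorseGauge M →
      ∀ (g : ℝ → X) (I J : Set ℝ),
        IsGeodesicOn g I → IsMorseWith M g I → J ⊆ I → J.OrdConnected →
        IsMorseWith (f₁ M) g J)
    (htriangle : ∀ (X : Type u) [inst : MetricSpace X], GeodesicSpace X →
      ∀ (M : ℝ → ℝ → ℝ), IsMorseGauge M →
      ∀ (α β g : ℝ → X) (L₁ L₂ L₃ : ℝ),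
        0 ≤ L₁ → 0 ≤ L₂ → 0 ≤ L₃ →
        IsGeodesicOn α (Icc 0 L₁) → IsGeodesicOn β (Icc 0 L₂) → IsGeodesicOn g (Icc 0 L₃) →
        α 0 = β 0 → g 0 = α L₁ → g L₃ = β L₂ →
        IsMorseWith M α (Icc 0 L₁) → IsMorseWith M β (Icc 0 L₂) →
        IsMorseWith (f₁ M) g (Icc 0 L₃)) :
    ∃ D₇ : (ℝ → ℝ → ℝ) → ℝ → ℝ,
      ∀ (X : Type u) [inst : MetricSpace X], GeodesicSpace X →
        ∀ (M : ℝ → ℝ → ℝ), IsMorseGauge M →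
        ∀ (W : Set X) (D : ℝ) (γ₁ γ₂ : ℝ → X) (t₁ t₂ : ℝ),
          (∀ (g : ℝ → X) (L : ℝ), 0 ≤ L → IsGeodesicOn g (Icc 0 L) →
            g 0 ∈ W → g L ∈ W → IsMorseWith (f₁ (f₁ M)) g (Icc 0 L) → L ≤ D) →
          IsGeodesicOn γ₁ (Ici 0) → IsGeodesicOn γ₂ (Ici 0) → γ₁ 0 = γ₂ 0 →
          IsMorseWith M γ₁ (Ici 0) → IsMorseWith M γ₂ (Ici 0) →
          0 ≤ t₁ → 0 ≤ t₂ → γ₁ t₁ ∈ W → γ₂ t₂ ∈ W →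
          ∀ s, 0 ≤ s → s ≤ max t₁ t₂ → dist (γ₁ s) (γ₂ s) ≤ D₇ M D := by
  refine ⟨fun M D => 2 * M 1 (2 * max D 0), ?_⟩
  intro X inst hX M hM W D γ₁ γ₂ t₁ t₂ hW hgeo1 hgeo2 h00 hm1 hm2 ht₁ ht₂ hw1 hw2
  -- Key claim, stated symmetrically so it can be applied with roles swapped.
  have key : ∀ (δ₁ δ₂ : ℝ → X) (u₁ u₂ : ℝ),
      IsGeodesicOn δ₁ (Ici 0) → IsGeodesicOn δ₂ (Ici 0) → δ₁ 0 = δ₂ 0 →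
      IsMorseWith M δ₁ (Ici 0) → IsMorseWith M δ₂ (Ici 0) →
      0 ≤ u₁ → 0 ≤ u₂ → δ₁ u₁ ∈ W → δ₂ u₂ ∈ W →
      ∀ s, 0 ≤ s → s ≤ u₂ → dist (δ₁ s) (δ₂ s) ≤ 2 * M 1 (2 * max D 0) := by
    intro δ₁ δ₂ u₁ u₂ hg1 hg2 hδ0 hδm1 hδm2 hu1 hu2 hWw1 hWw2 s hs0 hsu
    obtain ⟨g, hg0, hgL, hgg⟩ := hX (δ₁ u₁) (δ₂ u₂)
    set L : ℝ := dist (δ₁ u₁) (δ₂ u₂) with hLdef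
    have hL0 : (0:ℝ) ≤ L := dist_nonneg
    -- restrictions of δ₁, δ₂ are geodesics
    have hg1' : IsGeodesicOn δ₁ (Icc 0 u₁) := fun a ha b hb => hg1 a ha.1 b hb.1
    have hg2' : IsGeodesicOn δ₂ (Icc 0 u₂) := fun a ha b hb => hg2 a ha.1 b hb.1
    -- restrictions are f₁ M-Morse
    have hmor1 : IsMorseWith (f₁ M) δ₁ (Icc 0 u₁) :=
      hsub X hX M hM δ₁ (Ici 0) (Icc 0 u₁) hg1 hδm1 Icc_subset_Ici_self ordConnected_Icc
    have hmor2 : IsMorseWith (f₁ M) δ₂ (Icc 0 u₂) :=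
      hsub X hX M hM δ₂ (Ici 0) (Icc 0 u₂) hg2 hδm2 Icc_subset_Ici_self ordConnected_Icc
    -- the connecting geodesic is f₁ (f₁ M)-Morse, hence of length ≤ D
    have hgM : IsMorseWith (f₁ (f₁ M)) g (Icc 0 L) :=
      htriangle X hX (f₁ M) (hgauge M hM) δ₁ δ₂ g u₁ u₂ L hu1 hu2 hL0
        hg1' hg2' hgg hδ0 hg0 hgL hmor1 hmor2
    have hLD : L ≤ D := hW g L hL0 hgg (by rw [hg0]; exact hWw1) (by rw [hgL]; exact hWw2) hgM
    set E : ℝ := 2 * max D 0 with hEdef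
    have hE0 : (0:ℝ) ≤ E := by
      have : (0:ℝ) ≤ max D 0 := le_max_right _ _
      positivity
    have hLE : 2 * L ≤ E := by
      have : L ≤ max D 0 := le_trans hLD (le_max_left _ _)
      simp only [hEdef]; linarith
    -- the concatenated path
    set η : ℝ → X := fun u => if u ≤ u₂ then δ₂ u else g (u₂ + L - u) with hηdef
    -- distance estimates along η (one-sided)
    have main : ∀ u v : ℝ, 0 ≤ u → u ≤ v → v ≤ u₂ + L →
        dist (η u) (η v) ≤ v - u ∧ v - u - 2 * L ≤ dist (η u) (η v) := by
      intro u v hu huv hv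
      by_cases h1 : v ≤ u₂
      · have h0 : u ≤ u₂ := le_trans huv h1
        simp only [hηdef, if_pos h0, if_pos h1]
        have hd : dist (δ₂ u) (δ₂ v) = |u - v| := hg2 u hu v (le_trans hu huv)
        have habs : |u - v| = v - u := by rw [abs_sub_comm]; exact abs_of_nonneg (by linarith)
        rw [hd, habs]
        constructor <;> linarith
      · push_neg at h1
        by_cases h0 : u ≤ u₂
        · have hηu : η u = δ₂ u := if_pos h0
          have hηv : η v = g (u₂ + L - v) := if_neg (not_le.mpr h1)
          have hvL : u₂ + L - v ∈ Icc (0:ℝ) L := ⟨by linarith, by linarith⟩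
          have e1 : dist (δ₂ u) (δ₂ u₂) = u₂ - u := by
            rw [hg2 u hu u₂ hu2, abs_of_nonpos (by linarith)]; ring
          have e2 : dist (g L) (g (u₂ + L - v)) = v - u₂ := by
            rw [hgg L ⟨hL0, le_refl L⟩ _ hvL, abs_of_nonneg (by linarith)]; ring
          constructor
          · calc dist (η u) (η v) ≤ dist (η u) (δ₂ u₂) + dist (δ₂ u₂) (η v) := dist_triangle _ _ _
              _ = (u₂ - u) + (v - u₂) := by rw [hηu, hηv, e1, ← hgL, e2]
              _ = v - u := by ring
          · have htri : dist (δ₂ u) (δ₂ u₂) ≤ dist (η u) (η v) + dist (η v) (δ₂ u₂) := by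
              rw [hηu]; exact dist_triangle _ _ _
            have e2' : dist (η v) (δ₂ u₂) = v - u₂ := by
              rw [hηv, ← hgL, dist_comm]; exact e2
            rw [e1, e2'] at htri
            linarith
        · push_neg at h0
          have hηu : η u = g (u₂ + L - u) := if_neg (not_le.mpr h0)
          have hηv : η v = g (u₂ + L - v) := if_neg (not_le.mpr h1)
          have huL : u₂ + L - u ∈ Icc (0:ℝ) L := ⟨by linarith, by linarith⟩
          have hvL : u₂ + L - v ∈ Icc (0:ℝ) L := ⟨by linarith, by linarith⟩
          have hd : dist (η u) (η v) = v - u := by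
            rw [hηu, hηv, hgg _ huL _ hvL,
              show u₂ + L - u - (u₂ + L - v) = v - u by ring, abs_of_nonneg (by linarith)]
          rw [hd]; constructor <;> linarith
    -- η is a (1, E)-quasi-geodesic
    have hqg : IsQuasiGeodesicOn η (Icc 0 (u₂ + L)) 1 E := by
      intro u hu v hv
      rcases le_total u v with h | h
      · obtain ⟨hub, hlb⟩ := main u v hu.1 h hv.2
        have habs : |u - v| = v - u := by rw [abs_sub_comm]; exact abs_of_nonneg (by linarith)
        rw [habs]
        constructor
        · have : (1:ℝ) / 1 * (v - u) = v - u := by ring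
          rw [this]; linarith
        · linarith
      · obtain ⟨hub, hlb⟩ := main v u hv.1 h hu.2
        have habs : |u - v| = u - v := abs_of_nonneg (by linarith)
        rw [dist_comm, habs]
        constructor
        · have : (1:ℝ) / 1 * (u - v) = u - v := by ring
          rw [this]; linarith
        · linarith
    -- η is continuous (1-Lipschitz)
    have hcont : ContinuousOn η (Icc 0 (u₂ + L)) := by
      refine LipschitzOnWith.continuousOn (K := 1) ?_
      apply LipschitzOnWith.of_dist_le_mul
      intro x hx y hy
      rw [NNReal.coe_one, one_mul, Real.dist_eq]
      rcases le_total x y with h | h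
      · have := (main x y hx.1 h hy.2).1
        rw [abs_of_nonpos (by linarith : x - y ≤ 0)]
        linarith
      · have := (main y x hy.1 h hx.2).1
        rw [dist_comm, abs_of_nonneg (by linarith : 0 ≤ x - y)]
        linarith
    -- endpoints of η are on δ₁
    have hend0 : η 0 = δ₁ 0 := by
      simp only [hηdef, if_pos hu2]; exact hδ0.symm
    have hendb : η (u₂ + L) = δ₁ u₁ := by
      by_cases hL : u₂ + L ≤ u₂
      · have hLz : L = 0 := le_antisymm (by linarith) hL0
        simp only [hηdef, if_pos hL]
        rw [show u₂ + L = u₂ by rw [hLz]; ring, ← hgL, hLz, hg0]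
      · simp only [hηdef, if_neg hL, show u₂ + L - (u₂ + L) = 0 by ring, hg0]
    have hmema : η 0 ∈ δ₁ '' Ici 0 := ⟨0, Set.self_mem_Ici, hend0.symm⟩
    have hmemb : η (u₂ + L) ∈ δ₁ '' Ici 0 := ⟨u₁, hu1, hendb.symm⟩
    -- apply the Morse property of δ₁
    obtain ⟨w, hw0, hwd⟩ := hδm1 1 E le_rfl hE0 η 0 (u₂ + L) (by linarith)
      hcont hqg hmema hmemb s ⟨hs0, by linarith⟩
    have hηs : η s = δ₂ s := if_pos hsu
    rw [hηs] at hwd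
    -- conclude
    have e1 : dist (δ₁ w) (δ₁ 0) = w := by
      rw [hg1 w hw0 0 Set.self_mem_Ici, sub_zero, abs_of_nonneg hw0]
    have e2 : dist (δ₂ s) (δ₂ 0) = s := by
      rw [hg2 s hs0 0 Set.self_mem_Ici, sub_zero, abs_of_nonneg hs0]
    have h3 : |w - s| ≤ dist (δ₁ w) (δ₂ s) := by
      have h := abs_dist_sub_le (δ₁ w) (δ₂ s) (δ₂ 0)
      rw [← hδ0, e1, hδ0, e2] at h
      exact h
    have h4 : dist (δ₁ w) (δ₂ s) ≤ M 1 E := by rw [dist_comm]; exact hwd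
    have h5 : dist (δ₁ s) (δ₁ w) = |s - w| := hg1 s hs0 w hw0
    have h6 : |s - w| ≤ M 1 E := by rw [abs_sub_comm]; exact le_trans h3 h4
    calc dist (δ₁ s) (δ₂ s) ≤ dist (δ₁ s) (δ₁ w) + dist (δ₁ w) (δ₂ s) := dist_triangle _ _ _
      _ ≤ M 1 E + M 1 E := by rw [h5]; exact add_le_add h6 h4
      _ = 2 * M 1 (2 * max D 0) := by rw [hEdef]; ring
  -- finish: case on whether s ≤ t₂
  intro s hs0 hsmax
  rcases le_or_gt s t₂ with h | h
  · exact key γ₁ γ₂ t₁ t₂ hgeo1 hgeo2 h00 hm1 hm2 ht₁ ht₂ hw1 hw2 s hs0 h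
  · have hst1 : s ≤ t₁ := by
      rcases max_cases t₁ t₂ with ⟨he, _⟩ | ⟨he, _⟩
      · rw [he] at hsmax; exact hsmax
      · rw [he] at hsmax; linarith
    rw [dist_comm]
    exact key γ₂ γ₁ t₂ t₁ hgeo2 hgeo1 h00.symm hm2 hm1 ht₂ ht₁ hw2 hw1 s hs0 hst1
end

section
/- Let X be a geodesic metric space with basepoint e, M ≤ N Morse gauges, and z, z' points of X ∪ ∂_*X admitting M-Morse realisations ξ, ζ from a point a. If z' ∈ Õᴹ_{n+18δ_M}(z, a), then ζ ∈ Õᴹ_n(ξ, a); that is, membership of the direction z' in the neighbourhood of z of depth n + 18δ_M (witnessed by some pair of M-Morse realisations) implies that every/the given pair of M-Morse realisations (ξ, ζ) δ_M-fellow-travel on [0, n]. -/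
open Set Metric

universe u

/-- `ξ` and `ξ'` are `a`-realisations of the same point of `X ∪ ∂_* X`: either both are
geodesic segments with the same endpoint, or both are geodesic rays at finite Hausdorff
distance. -/
def SameTarget {X : Type*} [MetricSpace X] (ξ ξ' : ℝ → X) (Iξ Iξ' : Set ℝ) : Prop :=
  (∃ L L' : ℝ, 0 ≤ L ∧ 0 ≤ L' ∧ Iξ = Icc 0 L ∧ Iξ' = Icc 0 L' ∧ ξ L = ξ' L') ∨
  (Iξ = Ici 0 ∧ Iξ' = Ici 0 ∧
    EMetric.hausdorffEdist (ξ '' Ici 0) (ξ' '' Ici 0) ≠ ⊤)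

section aux
variable {X : Type u} [MetricSpace X]

lemma align {γ : ℝ → X} {I : Set ℝ} (hg : IsGeodesicOn γ I) (h0 : (0:ℝ) ∈ I)
    {u σ : ℝ} (hu : u ∈ I) (hu0 : 0 ≤ u) (hσ : σ ∈ I) (hσ0 : 0 ≤ σ)
    {x : X} (hx : dist (γ 0) x = u) {B : ℝ} (hB : dist x (γ σ) ≤ B) :
    dist x (γ u) ≤ 2 * B := by
  have h1 : dist (γ σ) (γ u) = |σ - u| := hg σ hσ u hu
  have h2 : dist (γ σ) (γ 0) = σ := by
    rw [hg σ hσ 0 h0]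
    simpa using abs_of_nonneg hσ0
  have h3 : |σ - u| ≤ B := by
    have h4 := abs_dist_sub_le (γ σ) x (γ 0)
    rw [h2, dist_comm x (γ 0), hx] at h4
    calc |σ - u| ≤ dist (γ σ) x := h4
      _ ≤ B := by rwa [dist_comm]
  calc dist x (γ u) ≤ dist x (γ σ) + dist (γ σ) (γ u) := dist_triangle _ _ _
    _ ≤ B + B := by rw [h1]; exact add_le_add hB h3
    _ = 2 * B := by ring

/-- Core lemma: projection quasigeodesic + Morse property. -/
lemma morse_close (hX : GeodesicSpace X) {M : ℝ → ℝ → ℝ}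
    {ξ α : ℝ → X} {Iξ Iα : Set ℝ}
    (hgξ : IsGeodesicOn ξ Iξ) (hgα : IsGeodesicOn α Iα)
    (h0ξ : (0:ℝ) ∈ Iξ) (h0α : (0:ℝ) ∈ Iα) (heq : α 0 = ξ 0)
    (hIξpos : Iξ ⊆ Ici 0) (hMor : IsMorseWith M ξ Iξ)
    {A : ℝ} (hA : 0 ≤ A) (hAα : Icc 0 A ⊆ Iα)
    {z : X} (hz : z ∈ ξ '' Iξ)
    (hmin : ∀ s ∈ Icc 0 A, dist z (α A) ≤ dist z (α s)) :
    ∀ u ∈ Icc 0 A, u ∈ Iξ → dist (α u) (ξ u) ≤ 2 * M 3 0 := by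
  obtain ⟨c, hc0, hcL, hcg⟩ := hX (α A) z
  set L := dist (α A) z with hLdef
  have hL0 : 0 ≤ L := dist_nonneg
  set η : ℝ → X := fun u => if u ≤ A then α u else c (u - A) with hη
  have hη1 : ∀ u, u ≤ A → η u = α u := by intro u h; simp [hη, h]
  have hη2 : ∀ u, A ≤ u → η u = c (u - A) := by
    intro u h
    by_cases h' : u ≤ A
    · have he : u = A := le_antisymm h' h
      simp [hη, he, hc0]
    · simp [hη, h']
  have hαd : ∀ s ∈ Icc 0 A, ∀ t ∈ Icc (0:ℝ) A, dist (α s) (α t) = |s - t| :=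
    fun s hs t ht => hgα s (hAα hs) t (hAα ht)
  have hcd : ∀ s ∈ Icc 0 L, ∀ t ∈ Icc (0:ℝ) L, dist (c s) (c t) = |s - t| := hcg
  have key : ∀ u1 u2, 0 ≤ u1 → u1 ≤ u2 → u2 ≤ A + L →
      (u2 - u1)/3 ≤ dist (η u1) (η u2) ∧ dist (η u1) (η u2) ≤ u2 - u1 := by
    intro u1 u2 h0 h12 h2
    by_cases ha2 : u2 ≤ A
    · rw [hη1 u1 (le_trans h12 ha2), hη1 u2 ha2,
        hαd u1 ⟨h0, le_trans h12 ha2⟩ u2 ⟨le_trans h0 h12, ha2⟩,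
        abs_sub_comm, abs_of_nonneg (by linarith)]
      constructor <;> linarith
    · push_neg at ha2
      by_cases ha1 : u1 ≤ A
      · -- cross case
        rw [hη1 u1 ha1, hη2 u2 ha2.le]
        have hv1 : (0:ℝ) ≤ u2 - A := by linarith
        have hv2 : u2 - A ≤ L := by linarith
        have e1 : dist (α A) (c (u2 - A)) = u2 - A := by
          have h5 := hcd 0 ⟨le_rfl, hL0⟩ (u2 - A) ⟨hv1, hv2⟩
          rw [hc0] at h5
          rw [h5, abs_sub_comm, sub_zero, abs_of_nonneg hv1]
        have e2 : dist z (c (u2 - A)) = L - (u2 - A) := by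
          have h5 := hcd L ⟨hL0, le_rfl⟩ (u2 - A) ⟨hv1, hv2⟩
          rw [hcL] at h5
          rw [h5, abs_of_nonneg (by linarith)]
        have eα : dist (α u1) (α A) = A - u1 := by
          rw [hαd u1 ⟨h0, ha1⟩ A ⟨hA, le_rfl⟩, abs_of_nonpos (by linarith)]
          ring
        have up : dist (α u1) (c (u2 - A)) ≤ u2 - u1 := by
          calc dist (α u1) (c (u2 - A)) ≤ dist (α u1) (α A) + dist (α A) (c (u2 - A)) :=
              dist_triangle _ _ _
            _ = u2 - u1 := by rw [eα, e1]; ring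
        have low1 : A - u1 - (u2 - A) ≤ dist (α u1) (c (u2 - A)) := by
          have h5 := dist_triangle (α u1) (c (u2 - A)) (α A)
          rw [eα] at h5
          rw [dist_comm (c (u2 - A)) (α A)] at h5
          rw [e1] at h5
          linarith
        have low2 : u2 - A ≤ dist (α u1) (c (u2 - A)) := by
          have h5 := dist_triangle z (c (u2 - A)) (α u1)
          rw [e2] at h5
          have h6 : L ≤ dist z (α u1) := by
            have := hmin u1 ⟨h0, ha1⟩
            rwa [dist_comm z (α A)] at this
          rw [dist_comm (c (u2 - A)) (α u1)] at h5
          linarith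
        constructor
        · rcases le_or_gt (A - u1) (2 * (u2 - A)) with h5 | h5
          · linarith
          · linarith
        · exact up
      · -- both on connector
        push_neg at ha1
        rw [hη2 u1 ha1.le, hη2 u2 ha2.le,
          hcd (u1 - A) ⟨by linarith, by linarith⟩ (u2 - A) ⟨by linarith, by linarith⟩,
          abs_sub_comm, abs_of_nonneg (by linarith)]
        constructor <;> linarith
  have hcont : ContinuousOn η (Icc 0 (A + L)) := by
    have hl : LipschitzOnWith 1 η (Icc 0 (A + L)) := by
      rw [lipschitzOnWith_iff_dist_le_mul]
      intro x hx y hy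
      rcases le_total x y with h | h
      · have h5 := (key x y hx.1 h hy.2).2
        rw [Real.dist_eq, NNReal.coe_one, one_mul, abs_sub_comm, abs_of_nonneg (by linarith)]
        exact h5
      · have h5 := (key y x hy.1 h hx.2).2
        rw [Real.dist_eq, NNReal.coe_one, one_mul, abs_of_nonneg (by linarith),
          dist_comm]
        exact h5
    exact hl.continuousOn
  have hqg : IsQuasiGeodesicOn η (Icc 0 (A + L)) 3 0 := by
    intro s hs t ht
    rcases le_total s t with h | h
    · obtain ⟨l, u⟩ := key s t hs.1 h ht.2
      rw [abs_sub_comm, abs_of_nonneg (by linarith)]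
      constructor <;> linarith
    · obtain ⟨l, u⟩ := key t s ht.1 h hs.2
      rw [abs_of_nonneg (by linarith), dist_comm (η s) (η t)] at *
      constructor <;> linarith
  have hend0 : η 0 ∈ ξ '' Iξ := ⟨0, h0ξ, by rw [hη1 0 hA, heq]⟩
  have hend1 : η (A + L) ∈ ξ '' Iξ := by
    have h5 : η (A + L) = z := by
      rw [hη2 (A + L) (by linarith)]
      simpa using hcL
    rw [h5]; exact hz
  have hm := hMor 3 0 (by norm_num) le_rfl η 0 (A + L) (by linarith) hcont hqg hend0 hend1
  intro u hu huξ
  obtain ⟨σ, hσI, hσd⟩ := hm u ⟨hu.1, by linarith [hu.2]⟩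
  rw [hη1 u hu.2] at hσd
  refine align hgξ h0ξ huξ hu.1 hσI (hIξpos hσI) ?_ hσd
  rw [← heq, hgα 0 h0α u (hAα hu)]
  simp [abs_of_nonneg hu.1]

end aux

section aux2
variable {X : Type u} [MetricSpace X]


lemma sameTarget_close (hX : GeodesicSpace X) {M : ℝ → ℝ → ℝ}
    {ξ ξ' : ℝ → X} {Iξ Iξ' : Set ℝ} {T : ℝ} (hT : 0 ≤ T)
    (hIξ : Icc 0 T ⊆ Iξ) (hIξ' : Icc 0 T ⊆ Iξ')
    (hgξ : IsGeodesicOn ξ Iξ) (hgξ' : IsGeodesicOn ξ' Iξ')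
    (heq : ξ' 0 = ξ 0)
    (hMor : IsMorseWith M ξ Iξ)
    (hreal : SameTarget ξ ξ' Iξ Iξ') :
    ∀ u ∈ Icc 0 T, dist (ξ' u) (ξ u) ≤ 2 * M 3 0 := by
  have h0ξ : (0:ℝ) ∈ Iξ := hIξ ⟨le_rfl, hT⟩
  have h0ξ' : (0:ℝ) ∈ Iξ' := hIξ' ⟨le_rfl, hT⟩
  rcases hreal with ⟨L, L', hL0, hL'0, hIe, hI'e, hend⟩ | ⟨hIe, hI'e, hH⟩
  · subst hIe; subst hI'e
    have hTL' : T ≤ L' := (hIξ' ⟨hT, le_rfl⟩).2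
    have hmc := morse_close hX hgξ hgξ' h0ξ h0ξ' heq (fun x hx => hx.1) hMor hL'0
      (subset_rfl) ⟨L, ⟨hL0, le_rfl⟩, rfl⟩
      (fun s _ => by rw [hend, dist_self]; exact dist_nonneg)
    intro u hu
    exact hmc u ⟨hu.1, le_trans hu.2 hTL'⟩ (hIξ hu)
  · subst hIe; subst hI'e
    set H := EMetric.hausdorffEdist (ξ '' Ici 0) (ξ' '' Ici 0) with hhH
    set K : ℝ := (H + 1).toReal with hK
    have hK0 : 0 ≤ K := ENNReal.toReal_nonneg
    set R : ℝ := T + 2 * K + 1 with hR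
    have hR0 : 0 ≤ R := by linarith
    have hHtop : H + 1 ≠ ⊤ := ENNReal.add_ne_top.mpr ⟨hH, ENNReal.one_ne_top⟩
    have h1 : EMetric.infEdist (ξ' R) (ξ '' Ici 0) < H + 1 := by
      calc EMetric.infEdist (ξ' R) (ξ '' Ici 0)
          ≤ EMetric.hausdorffEdist (ξ' '' Ici 0) (ξ '' Ici 0) :=
            EMetric.infEdist_le_hausdorffEdist_of_mem ⟨R, hR0, rfl⟩
        _ = H := EMetric.hausdorffEdist_comm
        _ < H + 1 := ENNReal.lt_add_right hH one_ne_zero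
    obtain ⟨z, hzmem, hze⟩ := EMetric.infEdist_lt_iff.mp h1
    have hzd : dist (ξ' R) z ≤ K := by
      rw [dist_edist, hK]
      exact ENNReal.toReal_mono hHtop hze.le
    obtain ⟨σz, hσz0, hσzeq⟩ := hzmem
    -- minimizer of s ↦ dist z (ξ' s) on [0, R]
    have hfc : ContinuousOn (fun s => dist z (ξ' s)) (Icc 0 R) := by
      have hl : LipschitzOnWith 1 (fun s => dist z (ξ' s)) (Icc 0 R) := by
        rw [lipschitzOnWith_iff_dist_le_mul]
        intro x hx y hy
        have h5 := abs_dist_sub_le (ξ' x) (ξ' y) z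
        rw [hgξ' x (mem_Ici.mpr hx.1) y (mem_Ici.mpr hy.1)] at h5
        rw [Real.dist_eq, NNReal.coe_one, one_mul, Real.dist_eq]
        calc |dist z (ξ' x) - dist z (ξ' y)|
            = |dist (ξ' x) z - dist (ξ' y) z| := by rw [dist_comm z (ξ' x), dist_comm z (ξ' y)]
          _ ≤ |x - y| := h5
      exact hl.continuousOn
    obtain ⟨sb, hsbmem, hsbmin⟩ :=
      isCompact_Icc.exists_isMinOn (nonempty_Icc.mpr hR0) hfc
    have hsbmin' : ∀ s ∈ Icc (0:ℝ) R, dist z (ξ' sb) ≤ dist z (ξ' s) := fun s hs => hsbmin hs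
    have hfsb : dist z (ξ' sb) ≤ K := by
      calc dist z (ξ' sb) ≤ dist z (ξ' R) := hsbmin' R ⟨hR0, le_rfl⟩
        _ ≤ K := by rw [dist_comm]; exact hzd
    have hza : R - K ≤ dist (ξ' 0) z := by
      have h6 : dist (ξ' 0) (ξ' R) = R := by
        rw [hgξ' 0 h0ξ' R (mem_Ici.mpr hR0), abs_sub_comm, sub_zero, abs_of_nonneg hR0]
      have h5 := dist_triangle (ξ' 0) z (ξ' R)
      have h8 : dist z (ξ' R) = dist (ξ' R) z := dist_comm _ _
      linarith
    have hTsb : T ≤ sb := by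
      have h5 := dist_triangle (ξ' 0) (ξ' sb) z
      have h6 : dist (ξ' 0) (ξ' sb) = sb := by
        rw [hgξ' 0 h0ξ' sb (mem_Ici.mpr hsbmem.1), abs_sub_comm, sub_zero,
          abs_of_nonneg hsbmem.1]
      have h7 : dist (ξ' sb) z = dist z (ξ' sb) := dist_comm _ _
      linarith
    have hmc := morse_close hX hgξ hgξ' h0ξ h0ξ' heq (subset_rfl) hMor hsbmem.1
      (fun x hx => hx.1) ⟨σz, hσz0, hσzeq⟩
      (fun s hs => hsbmin' s ⟨hs.1, le_trans hs.2 hsbmem.2⟩)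
    intro u hu
    exact hmc u ⟨hu.1, le_trans hu.2 hTsb⟩ hu.1

end aux2

theorem statement18_aux {X : Type u} [MetricSpace X] (hX : GeodesicSpace X)
    (M : ℝ → ℝ → ℝ) (hM : (∀ l e, 1 ≤ l → 0 ≤ e → 0 ≤ M l e))
    (a : X) (n : ℝ) (hn : 0 ≤ n)
    (ξ ζ ξ' ζ' : ℝ → X) (Iξ Iζ Iξ' Iζ' : Set ℝ)
    (morseDelta : ℝ) (hmd : morseDelta = max (4 * M 1 (2 * M 5 0) + 2 * M 5 0) (8 * M 3 0))
    (hIξ : Icc 0 (n + 18 * morseDelta) ⊆ Iξ)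
    (hIζ : Icc 0 (n + 18 * morseDelta) ⊆ Iζ)
    (hIξ' : Icc 0 (n + 18 * morseDelta) ⊆ Iξ')
    (hIζ' : Icc 0 (n + 18 * morseDelta) ⊆ Iζ')
    (hgξ : IsGeodesicOn ξ Iξ) (hgζ : IsGeodesicOn ζ Iζ)
    (hgξ' : IsGeodesicOn ξ' Iξ') (hgζ' : IsGeodesicOn ζ' Iζ')
    (h0ξ : ξ 0 = a) (h0ζ : ζ 0 = a) (h0ξ' : ξ' 0 = a) (h0ζ' : ζ' 0 = a)
    (hMξ : IsMorseWith M ξ Iξ) (hMζ : IsMorseWith M ζ Iζ)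
    (hrealξ : SameTarget ξ ξ' Iξ Iξ')
    (hrealζ : SameTarget ζ ζ' Iζ Iζ')
    (hclose : ∀ t ∈ Icc 0 (n + 18 * morseDelta), dist (ζ' t) (ξ' t) < morseDelta) :
    ∀ t ∈ Icc 0 n, dist (ζ t) (ξ t) < morseDelta := by
  intro t ht
  have hM30 : 0 ≤ M 3 0 := hM 3 0 (by norm_num) le_rfl
  have h8δ : 8 * M 3 0 ≤ morseDelta := by rw [hmd]; exact le_max_right _ _
  have hδ0 : 0 ≤ morseDelta := le_trans (by linarith) h8δ
  set T := n + 18 * morseDelta with hTdef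
  have hT0 : 0 ≤ T := by rw [hTdef]; linarith
  have heqξ : ξ' 0 = ξ 0 := by rw [h0ξ', h0ξ]
  have heqζ : ζ' 0 = ζ 0 := by rw [h0ζ', h0ζ]
  have hcξ := sameTarget_close hX hT0 hIξ hIξ' hgξ hgξ' heqξ hMξ hrealξ
  have hcζ := sameTarget_close hX hT0 hIζ hIζ' hgζ hgζ' heqζ hMζ hrealζ
  rcases le_or_gt morseDelta (2 * M 3 0) with hbad | hgood
  · exfalso
    have h1 := hclose 0 ⟨le_rfl, hT0⟩
    rw [h0ζ', h0ξ', dist_self] at h1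
    linarith
  have hTmem : T ∈ Icc 0 T := ⟨hT0, le_rfl⟩
  have hTIξ : T ∈ Iξ := hIξ hTmem
  have hdT : dist (ξ T) (ζ T) ≤ 4 * M 3 0 + morseDelta := by
    have h1 := hcξ T hTmem
    have h2 := hcζ T hTmem
    have h3 := (hclose T hTmem).le
    calc dist (ξ T) (ζ T) ≤ dist (ξ T) (ξ' T) + dist (ξ' T) (ζ' T) + dist (ζ' T) (ζ T) :=
        dist_triangle4 _ _ _ _
      _ ≤ 4 * M 3 0 + morseDelta := by
        rw [dist_comm (ξ T) (ξ' T), dist_comm (ξ' T) (ζ' T)]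
        linarith
  have hIξpos : Iξ ⊆ Ici 0 := by
    rcases hrealξ with ⟨L, L', _, _, he, _, _⟩ | ⟨he, _, _⟩
    · rw [he]; exact fun x hx => hx.1
    · rw [he]
  have hfc : ContinuousOn (fun s => dist (ξ T) (ζ s)) (Icc 0 T) := by
    have hl : LipschitzOnWith 1 (fun s => dist (ξ T) (ζ s)) (Icc 0 T) := by
      rw [lipschitzOnWith_iff_dist_le_mul]
      intro x hx y hy
      have h5 := abs_dist_sub_le (ζ x) (ζ y) (ξ T)
      rw [hgζ x (hIζ hx) y (hIζ hy)] at h5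
      rw [Real.dist_eq, NNReal.coe_one, one_mul, Real.dist_eq]
      calc |dist (ξ T) (ζ x) - dist (ξ T) (ζ y)|
          = |dist (ζ x) (ξ T) - dist (ζ y) (ξ T)| := by
            rw [dist_comm (ξ T) (ζ x), dist_comm (ξ T) (ζ y)]
        _ ≤ |x - y| := h5
    exact hl.continuousOn
  obtain ⟨sb, hsbmem, hsbmin⟩ := isCompact_Icc.exists_isMinOn (nonempty_Icc.mpr hT0) hfc
  have hsbmin' : ∀ s ∈ Icc (0:ℝ) T, dist (ξ T) (ζ sb) ≤ dist (ξ T) (ζ s) :=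
    fun s hs => hsbmin hs
  have hfsb : dist (ξ T) (ζ sb) ≤ 4 * M 3 0 + morseDelta :=
    le_trans (hsbmin' T hTmem) hdT
  have hnsb : n ≤ sb := by
    have h6 : dist (ζ 0) (ζ sb) = sb := by
      rw [hgζ 0 (hIζ ⟨le_rfl, hT0⟩) sb (hIζ hsbmem), abs_sub_comm, sub_zero,
        abs_of_nonneg hsbmem.1]
    have h7 : dist (ζ 0) (ξ T) = T := by
      rw [h0ζ, ← h0ξ, hgξ 0 (hIξ ⟨le_rfl, hT0⟩) T hTIξ, abs_sub_comm, sub_zero,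
        abs_of_nonneg hT0]
    have h5 := dist_triangle (ζ 0) (ζ sb) (ξ T)
    have h8 : dist (ζ sb) (ξ T) = dist (ξ T) (ζ sb) := dist_comm _ _
    have hTn : T = n + 18 * morseDelta := hTdef
    linarith
  have heqζξ : ζ 0 = ξ 0 := by rw [h0ζ, h0ξ]
  have hmc := morse_close hX hgξ hgζ (hIξ ⟨le_rfl, hT0⟩) (hIζ ⟨le_rfl, hT0⟩) heqζξ hIξpos hMξ
    hsbmem.1 (fun x hx => hIζ ⟨hx.1, le_trans hx.2 hsbmem.2⟩) ⟨T, hTIξ, rfl⟩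
    (fun s hs => hsbmin' s ⟨hs.1, le_trans hs.2 hsbmem.2⟩)
  have hfinal := hmc t ⟨ht.1, le_trans ht.2 hnsb⟩
    (hIξ ⟨ht.1, by rw [hTdef]; linarith [ht.2]⟩)
  linarith

/-- Remark on neighbourhoods: Let `M ≤ N` be Morse gauges, `z, z'` points of
`X ∪ ∂_* X` with `M`-Morse `a`-realisations `ξ, ζ`.  If `z' ∈ Õᴹ_{n+18δ_M}(z, a)` —
witnessed by `M`-Morse realisations `ξ'` of `z` and `ζ'` of `z'` which `δ_M`-fellow-travel
on `[0, n + 18 δ_M]` — then `ζ ∈ Õᴹ_n(ξ, a)`, i.e. `d(ζ t, ξ t) < δ_M` for `t ∈ [0, n]`. -/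
theorem statement18 {X : Type u} [MetricSpace X] (hX : GeodesicSpace X)
    (M N : ℝ → ℝ → ℝ) (hM : IsMorseGauge M) (hN : IsMorseGauge N) (hMN : GaugeLE M N)
    (a : X) (n : ℝ) (hn : 0 ≤ n)
    (ξ ζ ξ' ζ' : ℝ → X) (Iξ Iζ Iξ' Iζ' : Set ℝ)
    (hIξ : Icc 0 (n + 18 * morseDelta M) ⊆ Iξ)
    (hIζ : Icc 0 (n + 18 * morseDelta M) ⊆ Iζ)
    (hIξ' : Icc 0 (n + 18 * morseDelta M) ⊆ Iξ')
    (hIζ' : Icc 0 (n + 18 * morseDelta M) ⊆ Iζ')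
    (hgξ : IsGeodesicOn ξ Iξ) (hgζ : IsGeodesicOn ζ Iζ)
    (hgξ' : IsGeodesicOn ξ' Iξ') (hgζ' : IsGeodesicOn ζ' Iζ')
    (h0ξ : ξ 0 = a) (h0ζ : ζ 0 = a) (h0ξ' : ξ' 0 = a) (h0ζ' : ζ' 0 = a)
    (hMξ : IsMorseWith M ξ Iξ) (hMζ : IsMorseWith M ζ Iζ)
    (hMξ' : IsMorseWith M ξ' Iξ') (hMζ' : IsMorseWith M ζ' Iζ')
    (hrealξ : SameTarget ξ ξ' Iξ Iξ')
    (hrealζ : SameTarget ζ ζ' Iζ Iζ')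
    (hclose : ∀ t ∈ Icc 0 (n + 18 * morseDelta M), dist (ζ' t) (ξ' t) < morseDelta M) :
    ∀ t ∈ Icc 0 n, dist (ζ t) (ξ t) < morseDelta M := by
  exact statement18_aux hX M hM.1 a n hn ξ ζ ξ' ζ' Iξ Iζ Iξ' Iζ' (morseDelta M) rfl
    hIξ hIζ hIξ' hIζ' hgξ hgζ hgξ' hgζ' h0ξ h0ζ h0ξ' h0ζ' hMξ hMζ hrealξ hrealζ hclose
end

section
/- Let f' : 𝓜 → 𝓜 be any function on the set of Morse gauges (increasing maps ℝ≥1 × ℝ≥0 → ℝ≥0, continuous in the second argument) with f'(M) ≥ M pointwise for all M. Define f''(M)(λ, ε) = inf_{M' ≥ M} f'(M')(λ, ε) + 1 and f(M)(λ, ε) = ∫_ε^{ε+1} f''(M)(λ, x) dx. Then: (i) f is increasing with respect to the pointwise partial order on Morse gauges; (ii) for every M, f(M) is an increasing Morse gauge continuous in the second coordinate; and (iii) f(M) ≥ M pointwise. -/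
open Set Metric

universe u

open MeasureTheory
lemma aux_integrable {g : ℝ → ℝ} (hg : MonotoneOn g (Ici 0)) {a b : ℝ}
    (ha : 0 ≤ a) (hb : 0 ≤ b) : IntervalIntegrable g volume a b := by
  refine (hg.mono ?_).intervalIntegrable
  intro x hx
  exact le_trans (le_min ha hb) hx.1

lemma aux_shift {g : ℝ → ℝ} (hg : MonotoneOn g (Ici 0)) {e e' : ℝ}
    (he : 0 ≤ e) (hee' : e ≤ e') :
    (∫ x in e..(e + 1), g x) ≤ ∫ x in e'..(e' + 1), g x := by
  set d := e' - e with hd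
  have hd0 : 0 ≤ d := by simp [hd]; linarith
  have he' : 0 ≤ e' := le_trans he hee'
  have key : (∫ x in e'..(e' + 1), g x) = ∫ x in e..(e + 1), g (x + d) := by
    rw [intervalIntegral.integral_comp_add_right]
    congr 1 <;> simp [hd] <;> ring
  rw [key]
  have hint1 : IntervalIntegrable g volume e (e + 1) := aux_integrable hg he (by linarith)
  have hint2 : IntervalIntegrable (fun x => g (x + d)) volume e (e + 1) := by
    have := (aux_integrable hg he' (by linarith : (0:ℝ) ≤ e' + 1)).comp_add_right d
    have h1 : e' - d = e := by simp [hd]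
    have h2 : e' + 1 - d = e + 1 := by simp [hd]; ring
    rwa [h1, h2] at this
  refine intervalIntegral.integral_mono_on (by linarith) hint1 hint2 ?_
  intro x hx
  exact hg (le_trans he hx.1) (by simp; linarith [hx.1]) (by linarith)

lemma aux_cont {g : ℝ → ℝ} (hg : MonotoneOn g (Ici 0)) :
    ContinuousOn (fun e => ∫ x in e..(e + 1), g x) (Ici 0) := by
  have hG : ContinuousOn (fun t => ∫ x in (0:ℝ)..t, g x) (Ici 0) := by
    intro a ha
    simp only [mem_Ici] at ha
    have hmem : Icc (0:ℝ) (a + 2) ∈ nhdsWithin a (Ici 0) := by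
      refine Filter.mem_of_superset (inter_mem_nhdsWithin (Ici 0) (Iio_mem_nhds (by linarith : a < a + 2))) ?_
      rintro x ⟨hx0, hx2⟩
      exact ⟨hx0, le_of_lt hx2⟩
    have hcont : ContinuousOn (fun t => ∫ x in (0:ℝ)..t, g x) (Icc 0 (a + 2)) := by
      have h2 : (0:ℝ) ≤ a + 2 := by linarith
      have := intervalIntegral.continuousOn_primitive_interval'
        (aux_integrable hg le_rfl h2) (a := 0) (b₁ := 0) (b₂ := a + 2)
        (by rw [Set.uIcc_of_le h2]; exact ⟨le_rfl, h2⟩)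
      rwa [Set.uIcc_of_le h2] at this
    exact (hcont a ⟨ha, by linarith⟩).mono_of_mem_nhdsWithin hmem
  have h1 : ContinuousOn (fun e : ℝ => ∫ x in (0:ℝ)..(e+1), g x) (Ici 0) :=
    hG.comp (Continuous.continuousOn (by continuity)) (fun x hx => by
      simp only [mem_Ici] at *; linarith)
  refine (h1.sub hG).congr ?_
  intro e he
  simp only [mem_Ici] at he
  have h01 : IntervalIntegrable g volume 0 e := aux_integrable hg le_rfl he
  have h12 : IntervalIntegrable g volume e (e + 1) := aux_integrable hg he (by linarith)
  have := intervalIntegral.integral_add_adjacent_intervals h01 h12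
  show (∫ x in e..(e+1), g x) = (∫ x in (0:ℝ)..(e+1), g x) - ∫ x in (0:ℝ)..e, g x
  linarith

/-- monotone regularization of gauge functions: Let `f' : 𝓜 → 𝓜` be any
function on Morse gauges with `f' M ≥ M` pointwise.  Define
`f'' M lam eps = inf {f' M' lam eps | M' ∈ 𝓜, M' ≥ M} + 1` and
`f M lam eps = ∫ x in eps..(eps+1), f'' M lam x`.  Then `f M` is a Morse gauge (increasing
and continuous in the second coordinate), `f M ≥ M` pointwise, and `f` is increasing with
respect to the pointwise partial order on Morse gauges. -/
theorem statement19
    (f' : (ℝ → ℝ → ℝ) → (ℝ → ℝ → ℝ))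
    (hf'gauge : ∀ M, IsMorseGauge M → IsMorseGauge (f' M))
    (hf'ge : ∀ M, IsMorseGauge M → GaugeLE M (f' M))
    (f'' f : (ℝ → ℝ → ℝ) → ℝ → ℝ → ℝ)
    (hf'' : ∀ M lam eps, f'' M lam eps =
      sInf {y : ℝ | ∃ M' : ℝ → ℝ → ℝ, IsMorseGauge M' ∧ GaugeLE M M' ∧
        y = f' M' lam eps} + 1)
    (hf : ∀ M lam eps, f M lam eps = ∫ x in eps..(eps + 1), f'' M lam x) :
    ∀ M : ℝ → ℝ → ℝ, IsMorseGauge M →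
      IsMorseGauge (f M) ∧
      GaugeLE M (f M) ∧
      ∀ N : ℝ → ℝ → ℝ, IsMorseGauge N → GaugeLE M N → GaugeLE (f M) (f N) := by
  have hne : ∀ (M : ℝ → ℝ → ℝ), IsMorseGauge M → ∀ l e : ℝ,
      Set.Nonempty {y : ℝ | ∃ M' : ℝ → ℝ → ℝ, IsMorseGauge M' ∧ GaugeLE M M' ∧
        y = f' M' l e} :=
    fun M hM l e => ⟨f' M l e, M, hM, fun _ _ _ _ => le_rfl, rfl⟩
  have hlb : ∀ (M : ℝ → ℝ → ℝ) (l e : ℝ), 1 ≤ l → 0 ≤ e →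
      ∀ y ∈ {y : ℝ | ∃ M' : ℝ → ℝ → ℝ, IsMorseGauge M' ∧ GaugeLE M M' ∧
        y = f' M' l e}, M l e ≤ y := by
    rintro M l e hl he y ⟨M', hM', hMM', rfl⟩
    exact (hMM' l e hl he).trans (hf'ge M' hM' l e hl he)
  have hf''ge : ∀ (M : ℝ → ℝ → ℝ), IsMorseGauge M → ∀ l e : ℝ, 1 ≤ l → 0 ≤ e →
      M l e + 1 ≤ f'' M l e := by
    intro M hM l e hl he
    rw [hf'']
    exact add_le_add_left (le_csInf (hne M hM l e) (hlb M l e hl he)) 1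
  have hf''mono : ∀ (M : ℝ → ℝ → ℝ), IsMorseGauge M → ∀ l l' e e' : ℝ,
      1 ≤ l → 0 ≤ e → l ≤ l' → e ≤ e' → f'' M l e ≤ f'' M l' e' := by
    intro M hM l l' e e' hl he hll' hee'
    rw [hf'', hf'']
    refine add_le_add_left ?_ 1
    refine le_csInf (hne M hM l' e') ?_
    rintro y ⟨M', hM', hMM', rfl⟩
    refine (csInf_le ⟨M l e, hlb M l e hl he⟩ ⟨M', hM', hMM', rfl⟩).trans ?_
    exact (hf'gauge M' hM').2.1 l l' e e' hl he hll' hee'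
  have hf''monoN : ∀ (M N : ℝ → ℝ → ℝ), IsMorseGauge M → IsMorseGauge N →
      GaugeLE M N → ∀ l e : ℝ, 1 ≤ l → 0 ≤ e → f'' M l e ≤ f'' N l e := by
    intro M N hM hN hMN l e hl he
    rw [hf'', hf'']
    refine add_le_add_left (csInf_le_csInf ⟨M l e, hlb M l e hl he⟩ (hne N hN l e) ?_) 1
    rintro y ⟨M', hM', hNM', rfl⟩
    exact ⟨M', hM', fun l e hl he => (hMN l e hl he).trans (hNM' l e hl he), rfl⟩
  have gmono : ∀ (M : ℝ → ℝ → ℝ), IsMorseGauge M → ∀ l : ℝ, 1 ≤ l →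
      MonotoneOn (f'' M l) (Ici 0) :=
    fun M hM l hl x hx y _ hxy => hf''mono M hM l l x y hl hx le_rfl hxy
  intro M hM
  have hge : GaugeLE M (f M) := by
    intro l e hl he
    rw [hf]
    have h1 : (∫ x in e..(e + 1), (M l e + 1)) ≤ ∫ x in e..(e + 1), f'' M l x := by
      refine intervalIntegral.integral_mono_on (by linarith) intervalIntegrable_const
        (aux_integrable (gmono M hM l hl) he (by linarith)) ?_
      intro x hx
      have hx0 : 0 ≤ x := le_trans he hx.1
      calc M l e + 1 ≤ M l x + 1 := by
            exact add_le_add_left (hM.2.1 l l e x hl he le_rfl hx.1) 1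
        _ ≤ f'' M l x := hf''ge M hM l x hl hx0
    have h2 : (∫ x in e..(e + 1), (M l e + 1)) = M l e + 1 := by simp
    linarith [hM.1 l e hl he]
  refine ⟨⟨?_, ?_, ?_⟩, hge, ?_⟩
  · intro l e hl he
    exact le_trans (hM.1 l e hl he) (hge l e hl he)
  · intro l l' e e' hl he hll' hee'
    rw [hf, hf]
    have hl' : 1 ≤ l' := hl.trans hll'
    calc (∫ x in e..(e + 1), f'' M l x) ≤ ∫ x in e..(e + 1), f'' M l' x := by
          refine intervalIntegral.integral_mono_on (by linarith)
            (aux_integrable (gmono M hM l hl) he (by linarith))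
            (aux_integrable (gmono M hM l' hl') he (by linarith)) ?_
          intro x hx
          exact hf''mono M hM l l' x x hl (le_trans he hx.1) hll' le_rfl
      _ ≤ ∫ x in e'..(e' + 1), f'' M l' x := aux_shift (gmono M hM l' hl') he hee'
  · intro l hl
    refine (aux_cont (gmono M hM l hl)).congr ?_
    intro e _
    exact hf M l e
  · intro N hN hMN l e hl he
    rw [hf, hf]
    refine intervalIntegral.integral_mono_on (by linarith)
      (aux_integrable (gmono M hM l hl) he (by linarith))
      (aux_integrable (gmono N hN l hl) he (by linarith)) ?_
    intro x hx
    exact hf''monoN M N hM hN hMN l x hl (le_trans he hx.1)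
end
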